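/- arXiv:1303.4537 — 3 statements merged into one kernel-verified Lean document; each statement's English description precedes it below -/
import Mathlib

section
/- Hölder–weighted-Hölder product inequality: Let (X,d) be a metric space with a fixed base point x₀ and let α, β ∈ [0,1]. For every f ∈ H_α(X,ℂ) (a bounded α-Hölder function) and every g ∈ H_{α,β}(X,ℂ), the product fg belongs to H_{α,β}(X,ℂ) and ‖fg‖_{α,β} ≤ ‖f‖_α ‖g‖_{α,β}. -/
open scoped ENNReal

namespace WeightedHolder

/-- The weighted sup-seminorm `N_β(f) = sup_x |f(x)| / (1 + d(x,x₀)^β)`. -/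
noncomputable def Nbeta {X : Type*} [MetricSpace X] (x₀ : X) (β : ℝ) (f : X → ℂ) : ℝ≥0∞ :=
  ⨆ x : X, ENNReal.ofReal (‖f x‖ / (1 + dist x x₀ ^ β))

/-- The weighted Hölder seminorm
`m_{α,β}(f) = sup_{x≠y} |f(x)−f(y)| / (d(x,y)^α (1 + d(x,x₀)^β))`. -/
noncomputable def mab {X : Type*} [MetricSpace X] (x₀ : X) (α β : ℝ) (f : X → ℂ) : ℝ≥0∞ :=
  ⨆ (x : X) (y : X) (_ : x ≠ y),
    ENNReal.ofReal (‖f x - f y‖ / (dist x y ^ α * (1 + dist x x₀ ^ β)))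

/-- The weighted Hölder norm `‖f‖_{α,β} = N_β(f) + m_{α,β}(f)`. -/
noncomputable def whNorm {X : Type*} [MetricSpace X] (x₀ : X) (α β : ℝ) (f : X → ℂ) : ℝ≥0∞ :=
  Nbeta x₀ β f + mab x₀ α β f

/-- Membership in the weighted Hölder space `H_{α,β}(X,ℂ)`: continuous with finite norm. -/
def MemWH {X : Type*} [MetricSpace X] (x₀ : X) (α β : ℝ) (f : X → ℂ) : Prop :=
  Continuous f ∧ whNorm x₀ α β f < ⊤

/-- The sup norm `‖f‖_∞` (as an extended real). -/
noncomputable def supNormC {X : Type*} [MetricSpace X] (f : X → ℂ) : ℝ≥0∞ :=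
  ⨆ x : X, ENNReal.ofReal (‖f x‖)

/-- The (unweighted) α-Hölder seminorm `m_α(f) = sup_{x≠y} |f(x)−f(y)| / d(x,y)^α`. -/
noncomputable def mAlpha {X : Type*} [MetricSpace X] (α : ℝ) (f : X → ℂ) : ℝ≥0∞ :=
  ⨆ (x : X) (y : X) (_ : x ≠ y), ENNReal.ofReal (‖f x - f y‖ / dist x y ^ α)

/-- The α-Hölder norm `‖f‖_α = ‖f‖_∞ + m_α(f)`. -/
noncomputable def hNorm {X : Type*} [MetricSpace X] (α : ℝ) (f : X → ℂ) : ℝ≥0∞ :=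
  supNormC f + mAlpha α f

/-- Membership in `H_α(X,ℂ)`, the space of bounded α-Hölder functions. -/
def MemH {X : Type*} [MetricSpace X] (α : ℝ) (f : X → ℂ) : Prop :=
  Continuous f ∧ hNorm α f < ⊤

/-- **Hölder–weighted-Hölder product inequality.**
For `f ∈ H_α(X,ℂ)` and `g ∈ H_{α,β}(X,ℂ)`, the product `fg` belongs to `H_{α,β}(X,ℂ)`
and `‖fg‖_{α,β} ≤ ‖f‖_α ‖g‖_{α,β}`. -/
theorem holder_weighted_holder_product {X : Type*} [MetricSpace X] (x₀ : X) (α β : ℝ)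
    (hα : α ∈ Set.Icc (0:ℝ) 1) (hβ : β ∈ Set.Icc (0:ℝ) 1)
    (f g : X → ℂ) (hf : MemH α f) (hg : MemWH x₀ α β g) :
    MemWH x₀ α β (fun x => f x * g x) ∧
      whNorm x₀ α β (fun x => f x * g x) ≤ hNorm α f * whNorm x₀ α β g := by
  obtain ⟨hfc, hfn⟩ := hf
  obtain ⟨hgc, hgn⟩ := hg
  have hw : ∀ x : X, 0 < 1 + dist x x₀ ^ β := fun x =>
    lt_of_lt_of_le one_pos (le_add_of_nonneg_right (Real.rpow_nonneg dist_nonneg β))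
  -- Bound on the weighted sup part
  have hN : Nbeta x₀ β (fun x => f x * g x) ≤ supNormC f * Nbeta x₀ β g := by
    unfold Nbeta supNormC
    refine iSup_le fun x => ?_
    have h1 : ‖f x * g x‖ / (1 + dist x x₀ ^ β)
        = ‖f x‖ * (‖g x‖ / (1 + dist x x₀ ^ β)) := by
      rw [norm_mul, mul_div_assoc]
    rw [h1, ENNReal.ofReal_mul (norm_nonneg _)]
    exact mul_le_mul'
      (le_iSup (fun x => ENNReal.ofReal (‖f x‖)) x)
      (le_iSup (fun x => ENNReal.ofReal (‖g x‖ / (1 + dist x x₀ ^ β))) x)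
  -- Bound on the weighted Hölder seminorm part
  have hm : mab x₀ α β (fun x => f x * g x)
      ≤ Nbeta x₀ β g * mAlpha α f + supNormC f * mab x₀ α β g := by
    unfold mab
    refine iSup_le fun x => iSup_le fun y => iSup_le fun hxy => ?_
    have hd : 0 < dist x y ^ α := Real.rpow_pos_of_pos (dist_pos.mpr hxy) α
    have hwx := hw x
    have hden : 0 < dist x y ^ α * (1 + dist x x₀ ^ β) := mul_pos hd hwx
    have habs : ‖f x * g x - f y * g y‖
        ≤ ‖g x‖ * ‖f x - f y‖
          + ‖f y‖ * ‖g x - g y‖ := by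
      have : f x * g x - f y * g y = g x * (f x - f y) + f y * (g x - g y) := by ring
      rw [this]
      refine le_trans (norm_add_le _ _) ?_
      rw [norm_mul, norm_mul]
    have hstep : ‖f x * g x - f y * g y‖ / (dist x y ^ α * (1 + dist x x₀ ^ β))
        ≤ (‖g x‖ / (1 + dist x x₀ ^ β)) * (‖f x - f y‖ / dist x y ^ α)
          + ‖f y‖
            * (‖g x - g y‖ / (dist x y ^ α * (1 + dist x x₀ ^ β))) := by
      have e1 : (‖g x‖ / (1 + dist x x₀ ^ β))
            * (‖f x - f y‖ / dist x y ^ α)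
          = (‖g x‖ * ‖f x - f y‖)
            / (dist x y ^ α * (1 + dist x x₀ ^ β)) := by
        rw [div_mul_div_comm, mul_comm (1 + dist x x₀ ^ β)]
      have e2 : ‖f y‖
            * (‖g x - g y‖ / (dist x y ^ α * (1 + dist x x₀ ^ β)))
          = (‖f y‖ * ‖g x - g y‖)
            / (dist x y ^ α * (1 + dist x x₀ ^ β)) := by
        rw [mul_div_assoc]
      rw [e1, e2, ← add_div]
      exact div_le_div_of_nonneg_right habs hden.le |>.trans_eq rfl
    calc ENNReal.ofReal
          (‖f x * g x - f y * g y‖ / (dist x y ^ α * (1 + dist x x₀ ^ β)))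
        ≤ ENNReal.ofReal
            ((‖g x‖ / (1 + dist x x₀ ^ β)) * (‖f x - f y‖ / dist x y ^ α)
            + ‖f y‖
              * (‖g x - g y‖ / (dist x y ^ α * (1 + dist x x₀ ^ β)))) :=
          ENNReal.ofReal_le_ofReal hstep
      _ = ENNReal.ofReal
            ((‖g x‖ / (1 + dist x x₀ ^ β)) * (‖f x - f y‖ / dist x y ^ α))
          + ENNReal.ofReal (‖f y‖
              * (‖g x - g y‖ / (dist x y ^ α * (1 + dist x x₀ ^ β)))) := by
          rw [ENNReal.ofReal_add
            (mul_nonneg (div_nonneg (norm_nonneg _) hwx.le)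
              (div_nonneg (norm_nonneg _) hd.le))
            (mul_nonneg (norm_nonneg _) (div_nonneg (norm_nonneg _) hden.le))]
      _ ≤ Nbeta x₀ β g * mAlpha α f + supNormC f * mab x₀ α β g := by
          refine add_le_add ?_ ?_
          · rw [ENNReal.ofReal_mul (div_nonneg (norm_nonneg _) hwx.le)]
            refine mul_le_mul' ?_ ?_
            · exact le_iSup (fun x => ENNReal.ofReal
                (‖g x‖ / (1 + dist x x₀ ^ β))) x
            · unfold mAlpha
              exact le_iSup_of_le x (le_iSup_of_le y (le_iSup_of_le hxy le_rfl))
          · rw [ENNReal.ofReal_mul (norm_nonneg _)]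
            refine mul_le_mul' ?_ ?_
            · exact le_iSup (fun x => ENNReal.ofReal (‖f x‖)) y
            · unfold mab
              exact le_iSup_of_le x (le_iSup_of_le y (le_iSup_of_le hxy le_rfl))
  have hbound : whNorm x₀ α β (fun x => f x * g x) ≤ hNorm α f * whNorm x₀ α β g := by
    unfold whNorm hNorm
    calc Nbeta x₀ β (fun x => f x * g x) + mab x₀ α β (fun x => f x * g x)
        ≤ supNormC f * Nbeta x₀ β g
          + (Nbeta x₀ β g * mAlpha α f + supNormC f * mab x₀ α β g) := add_le_add hN hm
      _ ≤ (supNormC f + mAlpha α f) * (Nbeta x₀ β g + mab x₀ α β g) := by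
          rw [add_mul, mul_add, mul_add]
          calc supNormC f * Nbeta x₀ β g
              + (Nbeta x₀ β g * mAlpha α f + supNormC f * mab x₀ α β g)
              = supNormC f * Nbeta x₀ β g + supNormC f * mab x₀ α β g
                + mAlpha α f * Nbeta x₀ β g := by
                rw [mul_comm (Nbeta x₀ β g)]; ring
            _ ≤ supNormC f * Nbeta x₀ β g + supNormC f * mab x₀ α β g
                + (mAlpha α f * Nbeta x₀ β g + mAlpha α f * mab x₀ α β g) :=
                add_le_add le_rfl le_self_add
            _ = _ := by ring
  refine ⟨⟨(hfc.mul hgc), lt_of_le_of_lt hbound (ENNReal.mul_lt_top hfn hgn)⟩, hbound⟩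

end WeightedHolder
end

section
/- Exponential covariance decay under geometric ergodicity: Let (X_i)_{i≥0} be a stationary Markov chain on (X,A) with transition probability P and invariant initial distribution ν, and suppose that for some m ∈ [1,∞] there is a complex Banach space B of measurable functions X → ℂ satisfying conditions (A), (B), and (C). Then there exists a constant C > 0 such that for all f ∈ B and all g ∈ L^s(ν) with s = m/(m−1), and all k ≥ 0, |Cov( g(X₀), f(X_k) )| ≤ C ‖g‖_{L^s(ν)} ‖f‖_B θ^k, where θ ∈ [0,1) is the rate from condition (C) and Cov(g(X₀),f(X_k)) = E[ g(X₀)·(f(X_k) − νf) ]. -/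
open MeasureTheory Filter ProbabilityTheory
open scoped ENNReal NNReal

namespace SECLT

/-! ### The space `ℓ^∞(S)` and Hoffmann–Jørgensen convergence in distribution -/

/-- The sup-distance between two `S`-indexed families of reals (the `ℓ^∞(S)` distance). -/
noncomputable def supDist {S : Type*} (x y : S → ℝ) : ℝ≥0∞ :=
  ⨆ s : S, ENNReal.ofReal |x s - y s|

/-- Continuity of a functional on `ℓ^∞(S)` with respect to the sup-distance. -/
def SupContinuous {S : Type*} (φ : (S → ℝ) → ℝ) : Prop :=
  ∀ x : S → ℝ, ∀ ε : ℝ, 0 < ε → ∃ δ : ℝ, 0 < δ ∧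
    ∀ y : S → ℝ, supDist x y ≤ ENNReal.ofReal δ → |φ x - φ y| ≤ ε

/-- Boundedness of a functional on `ℓ^∞(S)`. -/
def BoundedFunctional {S : Type*} (φ : (S → ℝ) → ℝ) : Prop :=
  ∃ M : ℝ, ∀ x, |φ x| ≤ M

/-- Outer expectation `E* Z = inf { E Y : Y measurable integrable, Y ≥ Z }`. -/
noncomputable def outerExp {Ω : Type*} [MeasurableSpace Ω] (P : Measure Ω) (Z : Ω → ℝ) : ℝ :=
  sInf {r : ℝ | ∃ Y : Ω → ℝ, Measurable Y ∧ Integrable Y P ∧ (∀ ω, Z ω ≤ Y ω) ∧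
    (∫ ω, Y ω ∂P) = r}

/-- Hoffmann–Jørgensen convergence in distribution in `ℓ^∞(S)`: `E*(φ(Y_n)) → E(φ(K))`
for all bounded sup-continuous `φ`. -/
def ConvInDistr {S Ω Ω' : Type*} [MeasurableSpace Ω] [MeasurableSpace Ω'] (P : Measure Ω)
    (Y : ℕ → Ω → S → ℝ) (P' : Measure Ω') (K : Ω' → S → ℝ) : Prop :=
  ∀ φ : (S → ℝ) → ℝ, BoundedFunctional φ → SupContinuous φ →
    Tendsto (fun n => outerExp P fun ω => φ (Y n ω)) atTop
      (nhds (outerExp P' fun ω => φ (K ω)))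

/-- A process indexed by `S` is a centred Gaussian process: every finite linear combination
of its values has a centred Gaussian distribution. -/
def IsCenteredGaussian {S Ω' : Type*} [MeasurableSpace Ω'] (P' : Measure Ω')
    (K : Ω' → S → ℝ) : Prop :=
  ∀ (k : ℕ) (pts : Fin k → S) (a : Fin k → ℝ), ∃ v : ℝ≥0,
    Measure.map (fun ω => ∑ i, a i * K ω (pts i)) P' = gaussianReal 0 v

/-- Total boundedness with respect to the sup-distance. -/
def SupTotallyBounded {S : Type*} (T : Set (S → ℝ)) : Prop :=
  ∀ δ : ℝ, 0 < δ → ∃ A : Finset (S → ℝ), ∀ x ∈ T, ∃ y ∈ A, supDist x y ≤ ENNReal.ofReal δ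

/-- Closedness with respect to the sup-distance. -/
def SupClosed' {S : Type*} (T : Set (S → ℝ)) : Prop :=
  ∀ x : S → ℝ, (∀ ε : ℝ, 0 < ε → ∃ y ∈ T, supDist x y ≤ ENNReal.ofReal ε) → x ∈ T

/-- Tightness of the law of an `ℓ^∞(S)`-valued random element: for every `ε > 0` there is a
compact (= totally bounded and closed) set carrying all but `ε` of the (outer) mass. -/
def TightProcess {S Ω' : Type*} [MeasurableSpace Ω'] (P' : Measure Ω')
    (K : Ω' → S → ℝ) : Prop :=
  ∀ ε : ℝ, 0 < ε → ∃ T : Set (S → ℝ), SupTotallyBounded T ∧ SupClosed' T ∧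
    P' {ω | K ω ∉ T} ≤ ENNReal.ofReal ε

/-- Weak measurability of an `ℓ^∞(S)`-valued random element: compositions with bounded
sup-continuous functionals are measurable. -/
def WeaklyMeasurable {S Ω' : Type*} [MeasurableSpace Ω'] (K : Ω' → S → ℝ) : Prop :=
  ∀ φ : (S → ℝ) → ℝ, BoundedFunctional φ → SupContinuous φ →
    Measurable fun ω => φ (K ω)

/-- Separability of an `ℓ^∞(S)`-valued random element: almost surely the values lie in the
sup-closure of a countable set. -/
def SeparableValued {S Ω' : Type*} [MeasurableSpace Ω'] (P' : Measure Ω')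
    (K : Ω' → S → ℝ) : Prop :=
  ∃ T : Set (S → ℝ), T.Countable ∧
    ∀ᵐ ω ∂P', ∀ ε : ℝ, 0 < ε → ∃ y ∈ T, supDist (K ω) y ≤ ENNReal.ofReal ε

/-! ### Processes, covariance, stationarity, the sequential empirical process -/

/-- Covariance of two real random variables. -/
noncomputable def cov {Ω : Type*} [MeasurableSpace Ω] (P : Measure Ω) (Y Z : Ω → ℝ) : ℝ :=
  (∫ ω, Y ω * Z ω ∂P) - (∫ ω, Y ω ∂P) * (∫ ω, Z ω ∂P)

/-- A uniformly (sup-norm) bounded class of functions. -/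
def UnifBounded {𝓧 : Type*} (F : Set (𝓧 → ℝ)) : Prop :=
  ∃ M : ℝ, ∀ f ∈ F, ∀ x, |f x| ≤ M

/-- Stationarity of a process: the joint law is invariant under the time shift. -/
def IsStationary {Ω 𝓧 : Type*} [MeasurableSpace Ω] [MeasurableSpace 𝓧] (P : Measure Ω)
    (X : ℕ → Ω → 𝓧) : Prop :=
  ∀ k : ℕ, Measure.map (fun ω (i : ℕ) => X (i + k) ω) P
    = Measure.map (fun ω (i : ℕ) => X i ω) P

/-- The normalized sequential partial sum
`n^{-1/2} ∑_{i=1}^{⌊nt⌋} (f(X_i) - μ f)`. -/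
noncomputable def seqSum {Ω 𝓧 : Type*} [MeasurableSpace 𝓧] (X : ℕ → Ω → 𝓧)
    (μ : Measure 𝓧) (f : 𝓧 → ℝ) (t : ℝ) (n : ℕ) (ω : Ω) : ℝ :=
  (Real.sqrt (n : ℝ))⁻¹ * ∑ i ∈ Finset.Icc 1 ⌊(n : ℝ) * t⌋₊, (f (X i ω) - ∫ x, f x ∂μ)

/-- The sequential empirical process `U_n`, as a random element of `ℓ^∞(F × [0,1])`. -/
noncomputable def seqEmpProc {Ω 𝓧 : Type*} [MeasurableSpace 𝓧] (X : ℕ → Ω → 𝓧)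
    (μ : Measure 𝓧) (F : Set (𝓧 → ℝ)) (n : ℕ) (ω : Ω) :
    (↥F × ↥(Set.Icc (0:ℝ) 1)) → ℝ :=
  fun p => seqSum X μ (p.1 : 𝓧 → ℝ) (p.2 : ℝ) n ω

/-- The limiting (Kiefer) covariance structure:
`Cov(K(f₁,t₁),K(f₂,t₂)) = min(t₁,t₂) (∑_{k≥0} Cov(f₁(X₀),f₂(X_k)) + ∑_{k≥1} Cov(f₁(X_k),f₂(X₀)))`. -/
def HasKieferCovariance {Ω Ω' 𝓧 : Type*} [MeasurableSpace Ω] [MeasurableSpace Ω']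
    [MeasurableSpace 𝓧] (P : Measure Ω) (X : ℕ → Ω → 𝓧) (F : Set (𝓧 → ℝ))
    (P' : Measure Ω') (K : Ω' → (↥F × ↥(Set.Icc (0:ℝ) 1)) → ℝ) : Prop :=
  ∀ (f₁ f₂ : ↥F) (t₁ t₂ : ↥(Set.Icc (0:ℝ) 1)),
    cov P' (fun ω => K ω (f₁, t₁)) (fun ω => K ω (f₂, t₂))
      = min (t₁ : ℝ) (t₂ : ℝ) *
        ((∑' k : ℕ, cov P (fun ω => (f₁ : 𝓧 → ℝ) (X 0 ω)) fun ω => (f₂ : 𝓧 → ℝ) (X k ω))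
          + ∑' k : ℕ, cov P (fun ω => (f₁ : 𝓧 → ℝ) (X (k + 1) ω)) fun ω => (f₂ : 𝓧 → ℝ) (X 0 ω))

/-! ### Bracketing numbers and entropy conditions -/

/-- `F` is covered by `n` brackets `[l_i, u_i]` with `l_i, u_i ∈ G ⊆ B'`, of `L^s(ν)`-size at
most `ε` and of `B'`-size at most `A`.  Here `toFun` realizes elements of `B'` as functions
and `nB` measures their size. -/
def CoversWithBrackets {𝓧 B' : Type*} [MeasurableSpace 𝓧] (ν : Measure 𝓧) (s : ℝ≥0∞)
    (nB : B' → ℝ≥0∞) (toFun : B' → 𝓧 → ℝ) (F : Set (𝓧 → ℝ)) (G : Set B')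
    (ε A : ℝ) (n : ℕ) : Prop :=
  ∃ l u : Fin n → B',
    (∀ i, l i ∈ G ∧ u i ∈ G ∧
      eLpNorm (fun x => toFun (u i) x - toFun (l i) x) s ν ≤ ENNReal.ofReal ε ∧
      nB (u i) ≤ ENNReal.ofReal A ∧ nB (l i) ≤ ENNReal.ofReal A) ∧
    ∀ f ∈ F, ∃ i, ∀ x, toFun (l i) x ≤ f x ∧ f x ≤ toFun (u i) x

/-- The bracketing number `N(ε, A, F, G, L^s(ν))` (as an extended natural). -/
noncomputable def bracketingNumber {𝓧 B' : Type*} [MeasurableSpace 𝓧] (ν : Measure 𝓧)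
    (s : ℝ≥0∞) (nB : B' → ℝ≥0∞) (toFun : B' → 𝓧 → ℝ) (F : Set (𝓧 → ℝ)) (G : Set B')
    (ε A : ℝ) : ℝ≥0∞ :=
  sInf {N : ℝ≥0∞ | ∃ n : ℕ, N = (n : ℝ≥0∞) ∧ CoversWithBrackets ν s nB toFun F G ε A n}

/-- The exponential entropy condition with exponent `γ`:
`∫₀¹ ε^r sup_{ε≤δ≤1} N²(δ, exp(C δ^{-1/γ}), F, G, L^s(ν)) dε < ∞`
for some `C > 0` and some `r > -1`. -/
def ExpEntropy {𝓧 B' : Type*} [MeasurableSpace 𝓧] (ν : Measure 𝓧) (s : ℝ≥0∞)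
    (nB : B' → ℝ≥0∞) (toFun : B' → 𝓧 → ℝ) (F : Set (𝓧 → ℝ)) (G : Set B') (γ : ℝ) : Prop :=
  ∃ C : ℝ, 0 < C ∧ ∃ r : ℝ, -1 < r ∧
    (∫⁻ ε in Set.Ioo (0:ℝ) 1,
      ENNReal.ofReal (ε ^ r) *
        (⨆ δ ∈ Set.Icc ε 1,
          (bracketingNumber ν s nB toFun F G δ (Real.exp (C * δ ^ (-γ⁻¹)))) ^ 2)) < ⊤

/-- The entropy condition with bracket-size function `Ψ`:
`∫₀¹ ε^r sup_{ε≤δ≤1} N²(δ, Ψ(δ⁻¹), F, G, L^s(ν)) dε < ∞`. -/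
def PsiEntropy {𝓧 B' : Type*} [MeasurableSpace 𝓧] (ν : Measure 𝓧) (s : ℝ≥0∞)
    (nB : B' → ℝ≥0∞) (toFun : B' → 𝓧 → ℝ) (F : Set (𝓧 → ℝ)) (G : Set B')
    (Ψ : ℝ → ℝ) (r : ℝ) : Prop :=
  (∫⁻ ε in Set.Ioo (0:ℝ) 1,
    ENNReal.ofReal (ε ^ r) *
      (⨆ δ ∈ Set.Icc ε 1, (bracketingNumber ν s nB toFun F G δ (Ψ δ⁻¹)) ^ 2)) < ⊤

/-! ### Finite dimensional sequential CLT and moment bounds -/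

/-- `V_n` converges in distribution (via Cramér–Wold) to the centered multivariate normal law
with covariance matrix `Sig`. -/
def CramerWoldLimit {Ω : Type*} [MeasurableSpace Ω] {k : ℕ} (P : Measure Ω)
    (V : ℕ → Ω → Fin k → ℝ) (Sig : Matrix (Fin k) (Fin k) ℝ) : Prop :=
  ∀ a : Fin k → ℝ, ∃ v : ℝ≥0, (v : ℝ) = ∑ i, ∑ j, a i * Sig i j * a j ∧
    ∀ φ : BoundedContinuousFunction ℝ ℝ,
      Tendsto (fun n => ∫ ω, φ (∑ i, a i * V n ω i) ∂P) atTop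
        (nhds (∫ y, φ y ∂(gaussianReal 0 v)))

/-- Assumption 1: the finite dimensional sequential CLT for `G`-observables. -/
def FidiSeqCLT {Ω 𝓧 C' : Type*} [MeasurableSpace Ω] [MeasurableSpace 𝓧] (P : Measure Ω)
    (X : ℕ → Ω → 𝓧) (μ : Measure 𝓧) (toFun : C' → 𝓧 → ℝ) (G : Set C') : Prop :=
  ∀ (k : ℕ) (g : Fin k → C'), (∀ i, g i ∈ G) → ∀ t : Fin k → ℝ,
    (∀ i, t i ∈ Set.Icc (0:ℝ) 1) →
    ∃ Sig : Matrix (Fin k) (Fin k) ℝ,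
      CramerWoldLimit P (fun n ω i => seqSum X μ (toFun (g i)) (t i) n ω) Sig

/-- Assumption 1 with the Kiefer covariance matrix
`Σ_{ij} = min(t_i,t_j) (∑_{k≥0} Cov(f_i(X₀),f_j(X_k)) + ∑_{k≥1} Cov(f_j(X₀),f_i(X_k)))`. -/
def FidiSeqCLTKiefer {Ω 𝓧 C' : Type*} [MeasurableSpace Ω] [MeasurableSpace 𝓧] (P : Measure Ω)
    (X : ℕ → Ω → 𝓧) (μ : Measure 𝓧) (toFun : C' → 𝓧 → ℝ) (G : Set C') : Prop :=
  ∀ (k : ℕ) (g : Fin k → C'), (∀ i, g i ∈ G) → ∀ t : Fin k → ℝ,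
    (∀ i, t i ∈ Set.Icc (0:ℝ) 1) →
    CramerWoldLimit P (fun n ω i => seqSum X μ (toFun (g i)) (t i) n ω)
      (fun i j => min (t i) (t j) *
        ((∑' k' : ℕ, cov P (fun ω => toFun (g i) (X 0 ω)) fun ω => toFun (g j) (X k' ω))
          + ∑' k' : ℕ, cov P (fun ω => toFun (g j) (X 0 ω)) fun ω => toFun (g i) (X (k' + 1) ω)))

/-- Assumption 2: the `2p`-th moment bound
`E[(∑_{i=1}^n (f(X_i)-μf))^{2p}] ≤ ∑_{i=1}^p n^i ‖f‖_s^i Φ_i(‖f‖_C)` for all `f ∈ G'`. -/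
def MomentBound2p {Ω 𝓧 C' : Type*} [MeasurableSpace Ω] [MeasurableSpace 𝓧] (P : Measure Ω)
    (X : ℕ → Ω → 𝓧) (μ : Measure 𝓧) (toFun : C' → 𝓧 → ℝ) (nC : C' → ℝ) (G' : Set C')
    (p : ℕ) (s : ℝ≥0∞) (Φ : ℕ → ℝ → ℝ) : Prop :=
  ∀ f ∈ G', ∀ n : ℕ,
    (∫ ω, (∑ i ∈ Finset.Icc 1 n, (toFun f (X i ω) - ∫ x, toFun f x ∂μ)) ^ (2 * p) ∂P)
      ≤ ∑ i ∈ Finset.Icc 1 p,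
          (n : ℝ) ^ i * (eLpNorm (toFun f) s μ).toReal ^ i * Φ i (nC f)

/-- The multiple mixing property with respect to the space realized by `toFun`,
with mixing rate `θ` and polynomial degree bound `d₀`. -/
def MultipleMixing {Ω 𝓧 C' : Type*} [MeasurableSpace Ω] [MeasurableSpace 𝓧] (P : Measure Ω)
    (X : ℕ → Ω → 𝓧) (μ : Measure 𝓧) (toFun : C' → 𝓧 → ℝ) (nC : C' → ℝ) (s : ℝ≥0∞)
    (θ : ℝ) (d₀ : ℕ) : Prop :=
  ∀ p : ℕ, 0 < p → ∃ (ℓ : ℕ) (Q : MvPolynomial (Fin p) ℝ), Q.totalDegree ≤ d₀ ∧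
    ∀ f : C', (∫ x, toFun f x ∂μ) = 0 → (∀ x, |toFun f x| ≤ 1) →
    ∀ i : ℕ → ℕ, Monotone i → ∀ q : ℕ, 1 ≤ q → q ≤ p →
      |cov P (fun ω => ∏ j ∈ Finset.range q, toFun f (X (i j) ω))
          (fun ω => ∏ j ∈ Finset.Icc q p, toFun f (X (i j) ω))|
        ≤ (eLpNorm (toFun f) s μ).toReal * nC f ^ ℓ *
            MvPolynomial.eval (fun j : Fin p => ((i ((j : ℕ) + 1) : ℝ) - (i (j : ℕ) : ℝ))) Q *
            θ ^ (i q - i (q - 1))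

/-! ### Time discretization -/

/-- `τ_q t`, the largest point of the form `(j-1) 2^{-q}`, `j = 1, …, 2^q`, below `t`. -/
noncomputable def tauq (q : ℕ) (t : ℝ) : ℝ :=
  (min ⌊(2:ℝ) ^ q * t⌋₊ (2 ^ q - 1) : ℕ) * ((2:ℝ) ^ q)⁻¹

/-- The dyadic partition interval `T_{q,j}` of `[0,1]` (for `j = 0, …, 2^q - 1`). -/
noncomputable def Tsetq (q j : ℕ) : Set ℝ :=
  if j + 1 = 2 ^ q then Set.Icc (1 - ((2:ℝ) ^ q)⁻¹) 1
  else Set.Ico ((j : ℝ) * ((2:ℝ) ^ q)⁻¹) (((j : ℝ) + 1) * ((2:ℝ) ^ q)⁻¹)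

/-! ### Markov chains and Banach spaces of functions -/

/-- The Markov property of `(X_i)` with transition kernel `κ`:
`E[h(X_0,…,X_n) g(X_{n+1})] = E[h(X_0,…,X_n) ∫ g dκ(X_n, ·)]` for bounded measurable `g, h`. -/
def IsMarkovChain {Ω 𝓧 : Type*} [MeasurableSpace Ω] [MeasurableSpace 𝓧] (P : Measure Ω)
    (X : ℕ → Ω → 𝓧) (κ : ProbabilityTheory.Kernel 𝓧 𝓧) : Prop :=
  ∀ n : ℕ, ∀ g : 𝓧 → ℝ, Measurable g → (∃ M, ∀ x, |g x| ≤ M) →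
  ∀ h : (Fin (n + 1) → 𝓧) → ℝ, Measurable h → (∃ M, ∀ v, |h v| ≤ M) →
    (∫ ω, h (fun i => X (i : ℕ) ω) * g (X (n + 1) ω) ∂P)
      = ∫ ω, h (fun i => X (i : ℕ) ω) * ∫ y, g y ∂(κ (X n ω)) ∂P

/-- Condition (A): `1 ∈ B`; `|f|, conj f ∈ B` for `f ∈ B`; elements of `B` are measurable;
Dirac measures are continuous functionals on `B`. -/
def CondA {𝓧 B : Type*} [MeasurableSpace 𝓧] [NormedAddCommGroup B] [NormedSpace ℂ B]
    (ι : B →ₗ[ℂ] 𝓧 → ℂ) : Prop :=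
  (∀ b : B, Measurable (ι b)) ∧
  (∃ one : B, ι one = fun _ => 1) ∧
  (∀ b : B, ∃ babs : B, ι babs = fun x => (‖ι b x‖ : ℂ)) ∧
  (∀ b : B, ∃ bconj : B, ι bconj = fun x => starRingEnd ℂ (ι b x)) ∧
  (∀ x : 𝓧, ∃ c : ℝ, 0 ≤ c ∧ ∀ b : B, ‖ι b x‖ ≤ c * ‖b‖)

/-- Condition (B): `B` is continuously included in `L^m(ν)`. -/
def CondB {𝓧 B : Type*} [MeasurableSpace 𝓧] [NormedAddCommGroup B] [NormedSpace ℂ B]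
    (ι : B →ₗ[ℂ] 𝓧 → ℂ) (ν : Measure 𝓧) (m : ℝ≥0∞) : Prop :=
  ∃ K : ℝ, 0 < K ∧ ∀ b : B, eLpNorm (ι b) m ν ≤ ENNReal.ofReal (K * ‖b‖)

/-- Condition (C): geometric ergodicity of the operator `PB` on `B`,
`‖P^n f − (νf) 1‖_B ≤ κc ‖f‖_B θ^n`. -/
def CondC {𝓧 B : Type*} [MeasurableSpace 𝓧] [NormedAddCommGroup B] [NormedSpace ℂ B]
    (ι : B →ₗ[ℂ] 𝓧 → ℂ) (ν : Measure 𝓧) (one : B) (PB : B →L[ℂ] B)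
    (κc θ : ℝ) : Prop :=
  ∀ b : B, ∀ n : ℕ, ‖(PB ^ n) b - (∫ x, ι b x ∂ν) • one‖ ≤ κc * ‖b‖ * θ ^ n

/-- Condition (E): products of functions of `B` bounded by one belong to `B`, with
`‖fg‖_B ≤ C max(‖f‖_B, ‖g‖_B)^ℓ`. -/
def CondE {𝓧 B : Type*} [MeasurableSpace 𝓧] [NormedAddCommGroup B] [NormedSpace ℂ B]
    (ι : B →ₗ[ℂ] 𝓧 → ℂ) : Prop :=
  ∃ C : ℝ, 0 < C ∧ ∃ ℓ : ℕ, ∀ f g : B,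
    (∀ x, ‖ι f x‖ ≤ 1) → (∀ x, ‖ι g x‖ ≤ 1) →
    ∃ h : B, (∀ x, ι h x = ι f x * ι g x) ∧ ‖h‖ ≤ C * max ‖f‖ ‖g‖ ^ ℓ

/-- Compatibility of the abstract operator `PB` with the Markov kernel `κ`:
`(PB f)(x) = ∫ f dκ(x,·)`. -/
def MarkovOpCompat {𝓧 B : Type*} [MeasurableSpace 𝓧] [NormedAddCommGroup B]
    [NormedSpace ℂ B] (ι : B →ₗ[ℂ] 𝓧 → ℂ) (κ : ProbabilityTheory.Kernel 𝓧 𝓧)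
    (PB : B →L[ℂ] B) : Prop :=
  ∀ b : B, ∀ x, ι (PB b) x = ∫ y, ι b y ∂(κ x)

/-- Condition (D) for a real function `f`: the perturbed operators `P_{f,t} φ = P(e^{itf} φ)`
act on `B` for `t` near `0`, and `t ↦ P_{f,t}` is twice continuously differentiable with
`k`-th derivative at `0` given by `φ ↦ P((if)^k φ)`. -/
def CondD {𝓧 B : Type*} [MeasurableSpace 𝓧] [NormedAddCommGroup B] [NormedSpace ℂ B]
    (ι : B →ₗ[ℂ] 𝓧 → ℂ) (κ : ProbabilityTheory.Kernel 𝓧 𝓧) (f : 𝓧 → ℝ) : Prop :=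
  ∃ ε : ℝ, 0 < ε ∧ ∃ Q : ℝ → B →L[ℂ] B,
    (∀ t ∈ Set.Ioo (-ε) ε, ∀ φ : B, ∀ x,
      ι (Q t φ) x = ∫ y, Complex.exp (Complex.I * (t : ℂ) * (f y : ℂ)) * ι φ y ∂(κ x)) ∧
    ContDiffOn ℝ 2 Q (Set.Ioo (-ε) ε) ∧
    (∀ φ : B, ∀ x, ι (derivWithin Q (Set.Ioo (-ε) ε) 0 φ) x
        = ∫ y, (Complex.I * (f y : ℂ)) * ι φ y ∂(κ x)) ∧
    (∀ φ : B, ∀ x, ι (derivWithin (derivWithin Q (Set.Ioo (-ε) ε)) (Set.Ioo (-ε) ε) 0 φ) x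
        = ∫ y, (Complex.I * (f y : ℂ)) ^ 2 * ι φ y ∂(κ x))

/-- An element of `B` is real-valued. -/
def RealValued {𝓧 B : Type*} [NormedAddCommGroup B] [NormedSpace ℂ B]
    (ι : B →ₗ[ℂ] 𝓧 → ℂ) (b : B) : Prop :=
  ∀ x, (ι b x).im = 0

end SECLT

open SECLT

section AuxLemmas

open MeasureTheory ProbabilityTheory Filter

/-! Auxiliary truncation machinery. -/

noncomputable def myTrunc {α E : Type*} [NormedAddCommGroup E] (F : α → E) (N : ℕ) (x : α) : E :=
  if ‖F x‖ ≤ (N : ℝ) then F x else 0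

lemma myTrunc_norm_le_coe {α E : Type*} [NormedAddCommGroup E] (F : α → E) (N : ℕ) (x : α) :
    ‖myTrunc F N x‖ ≤ (N : ℝ) := by
  unfold myTrunc; split
  · assumption
  · simp

lemma myTrunc_norm_le {α E : Type*} [NormedAddCommGroup E] (F : α → E) (N : ℕ) (x : α) :
    ‖myTrunc F N x‖ ≤ ‖F x‖ := by
  unfold myTrunc; split
  · exact le_rfl
  · simp [norm_nonneg]

lemma myTrunc_tendsto {α E : Type*} [NormedAddCommGroup E] (F : α → E) (x : α) :
    Tendsto (fun N => myTrunc F N x) atTop (nhds (F x)) := by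
  have h : ∀ᶠ N : ℕ in atTop, myTrunc F N x = F x := by
    refine Filter.eventually_atTop.2 ⟨⌈‖F x‖⌉₊, fun N hN => ?_⟩
    exact if_pos ((Nat.le_ceil _).trans (Nat.cast_le.2 hN))
  exact Tendsto.congr' (by filter_upwards [h] with N hN; rw [hN]) tendsto_const_nhds

lemma myTrunc_measurable {α E : Type*} [MeasurableSpace α] [NormedAddCommGroup E]
    [MeasurableSpace E] [OpensMeasurableSpace E] {F : α → E} (hF : Measurable F) (N : ℕ) :
    Measurable (myTrunc F N) :=
  Measurable.ite (measurableSet_le hF.norm measurable_const) hF measurable_const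

/-! Composition integrability / `Memℒp` along a marginal. -/

lemma aux_comp_integrable {Ω 𝓧 E : Type*} [MeasurableSpace Ω] [MeasurableSpace 𝓧]
    [NormedAddCommGroup E] {P : MeasureTheory.Measure Ω} {ν : MeasureTheory.Measure 𝓧}
    {Xj : Ω → 𝓧} (hXj : Measurable Xj) (hmapj : MeasureTheory.Measure.map Xj P = ν)
    {u : 𝓧 → E} (hu : AEStronglyMeasurable u ν) (huint : Integrable u ν) :
    Integrable (fun ω => u (Xj ω)) P := by
  have h := integrable_map_measure (μ := P) (f := Xj) (g := u) (by rwa [hmapj]) hXj.aemeasurable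
  rw [hmapj] at h
  exact h.mp huint

lemma aux_comp_memℒp {Ω 𝓧 E : Type*} [MeasurableSpace Ω] [MeasurableSpace 𝓧]
    [NormedAddCommGroup E] {P : MeasureTheory.Measure Ω} {ν : MeasureTheory.Measure 𝓧}
    {p : ℝ≥0∞} {Xj : Ω → 𝓧} (hXj : Measurable Xj) (hmapj : MeasureTheory.Measure.map Xj P = ν)
    {u : 𝓧 → E} (hu : AEStronglyMeasurable u ν) (humem : MemLp u p ν) :
    MemLp (fun ω => u (Xj ω)) p P := by
  have h := memLp_map_measure_iff (μ := P) (f := Xj) (g := u) (p := p)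
    (by rwa [hmapj]) hXj.aemeasurable
  rw [hmapj] at h
  exact h.mp humem

/-! Hölder: product of `L^s` and `L^m` functions is integrable. -/

lemma aux_integrable_mul {α : Type*} [MeasurableSpace α] {μ : MeasureTheory.Measure α}
    {s m : ℝ≥0∞} (hms : 1 / s + 1 / m = 1) {u v : α → ℝ}
    (hu : MemLp u s μ) (hv : MemLp v m μ) : Integrable (fun x => u x * v x) μ := by
  refine memLp_one_iff_integrable.mp ⟨hu.1.mul hv.1, ?_⟩
  have hpqr : (1 : ℝ≥0∞) / 1 = 1 / s + 1 / m := by rw [div_one]; exact hms.symm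
  have h := eLpNorm_le_eLpNorm_mul_eLpNorm'_of_norm hu.1 hv.1 (· * ·) 1 (p := s) (q := m) (r := 1)
    (Filter.Eventually.of_forall fun x => by simp [norm_mul])
    (hpqr := ⟨by simpa [one_div] using hpqr.symm⟩)
  rw [ENNReal.coe_one, one_mul] at h
  exact h.trans_lt (ENNReal.mul_lt_top hu.2 hv.2)

/-! Invariance of the marginals of the chain. -/

lemma aux_marginals {Ω 𝓧 : Type*} [MeasurableSpace Ω] [MeasurableSpace 𝓧]
    (P : MeasureTheory.Measure Ω) [MeasureTheory.IsProbabilityMeasure P]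
    (X : ℕ → Ω → 𝓧) (hXmeas : ∀ i, Measurable (X i))
    (κ : ProbabilityTheory.Kernel 𝓧 𝓧) [ProbabilityTheory.IsMarkovKernel κ]
    (hMarkov : IsMarkovChain P X κ)
    (ν : MeasureTheory.Measure 𝓧) [MeasureTheory.IsProbabilityMeasure ν]
    (hinv : ν.bind (fun x => κ x) = ν)
    (hinit : MeasureTheory.Measure.map (X 0) P = ν) :
    ∀ n, MeasureTheory.Measure.map (X n) P = ν := by
  intro n
  induction n with
  | zero => exact hinit
  | succ n ih =>
    ext A hA
    rw [MeasureTheory.Measure.map_apply (hXmeas (n + 1)) hA]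
    have hgmeas : Measurable (A.indicator (fun _ => (1 : ℝ))) := measurable_const.indicator hA
    have hgbd : ∀ x, |A.indicator (fun _ => (1 : ℝ)) x| ≤ 1 := fun x => by
      by_cases hx : x ∈ A <;> simp [hx]
    have h1 := hMarkov n _ hgmeas ⟨1, hgbd⟩ (fun _ => (1 : ℝ)) measurable_const
      ⟨1, fun _ => by norm_num⟩
    simp only [one_mul] at h1
    have hL : ∫ ω, A.indicator (fun _ => (1 : ℝ)) (X (n + 1) ω) ∂P
        = (P (X (n + 1) ⁻¹' A)).toReal := by
      have he : ∀ ω, A.indicator (fun _ => (1 : ℝ)) (X (n + 1) ω)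
          = (X (n + 1) ⁻¹' A).indicator (fun _ => (1 : ℝ)) ω := fun ω => by
        by_cases hx : X (n + 1) ω ∈ A <;> simp [Set.indicator, hx]
      rw [integral_congr_ae (Filter.Eventually.of_forall he),
        integral_indicator_const (1 : ℝ) ((hXmeas (n + 1)) hA)]
      simp [Measure.real]
    have hR : ∫ ω, (∫ y, A.indicator (fun _ => (1 : ℝ)) y ∂(κ (X n ω))) ∂P
        = (ν A).toReal := by
      have hinner : ∀ x, ∫ y, A.indicator (fun _ => (1 : ℝ)) y ∂(κ x) = (κ x A).toReal :=
        fun x => by rw [integral_indicator_const (1 : ℝ) hA]; simp [Measure.real]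
      rw [integral_congr_ae (Filter.Eventually.of_forall fun ω => hinner (X n ω))]
      have hmap' : ∫ ω, (κ (X n ω) A).toReal ∂P = ∫ x, (κ x A).toReal ∂ν := by
        have h := MeasureTheory.integral_map (μ := P) (φ := X n) (hXmeas n).aemeasurable
          (f := fun x => (κ x A).toReal)
          ((κ.measurable_coe hA).ennreal_toReal).aestronglyMeasurable
        rw [ih] at h
        exact h.symm
      rw [hmap', integral_toReal (κ.measurable_coe hA).aemeasurable
        (Filter.Eventually.of_forall fun x => measure_lt_top _ _),
        ← MeasureTheory.Measure.bind_apply hA (κ.measurable.aemeasurable), hinv]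
    rw [hL, hR] at h1
    exact (ENNReal.toReal_eq_toReal_iff' (measure_ne_top _ _) (measure_ne_top _ _)).mp h1

/-! The one-step Markov identity, for integrable complex observables. -/

lemma aux_markov_step {Ω 𝓧 : Type*} [MeasurableSpace Ω] [MeasurableSpace 𝓧]
    (P : MeasureTheory.Measure Ω) [MeasureTheory.IsProbabilityMeasure P]
    (X : ℕ → Ω → 𝓧) (hXmeas : ∀ i, Measurable (X i))
    (κ : ProbabilityTheory.Kernel 𝓧 𝓧) [ProbabilityTheory.IsMarkovKernel κ]
    (hMarkov : IsMarkovChain P X κ)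
    (ν : MeasureTheory.Measure 𝓧) [MeasureTheory.IsProbabilityMeasure ν]
    (hinv : ν.bind (fun x => κ x) = ν)
    (hmap : ∀ n, MeasureTheory.Measure.map (X n) P = ν)
    (n : ℕ) (g : 𝓧 → ℝ) (hg : Measurable g) (Mg : ℝ) (hgb : ∀ x, |g x| ≤ Mg)
    (F : 𝓧 → ℂ) (hF : Measurable F) (hFint : Integrable F ν) :
    ∫ ω, (g (X 0 ω) : ℂ) * F (X (n + 1) ω) ∂P
      = ∫ ω, (g (X 0 ω) : ℂ) * (∫ y, F y ∂(κ (X n ω))) ∂P := by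
  classical
  set T : ℕ → 𝓧 → ℂ := fun N => myTrunc F N with hT
  have hTmeas : ∀ N, Measurable (T N) := fun N => myTrunc_measurable hF N
  have hTb : ∀ N y, ‖T N y‖ ≤ (N : ℝ) := fun N y => myTrunc_norm_le_coe F N y
  have hgmeasC : Measurable fun ω => (g (X 0 ω) : ℂ) :=
    Complex.measurable_ofReal.comp (hg.comp (hXmeas 0))
  have hTint : ∀ N (x : 𝓧), Integrable (T N) (κ x) := fun N x =>
    (integrable_const ((N : ℝ))).mono' (hTmeas N).aestronglyMeasurable
      (Filter.Eventually.of_forall (hTb N))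
  have hkernInt_meas : ∀ N, StronglyMeasurable fun x => ∫ y, T N y ∂(κ x) := fun N =>
    MeasureTheory.StronglyMeasurable.integral_kernel_prod_right
      (f := fun (_ : 𝓧) y => T N y) ((hTmeas N).comp measurable_snd).stronglyMeasurable
  have hkern_bd : ∀ N x, ‖∫ y, T N y ∂(κ x)‖ ≤ (N : ℝ) := fun N x => by
    calc ‖∫ y, T N y ∂(κ x)‖ ≤ ∫ y, ‖T N y‖ ∂(κ x) := norm_integral_le_integral_norm _
      _ ≤ ∫ _y, (N : ℝ) ∂(κ x) := integral_mono ((hTint N x).norm) (integrable_const _)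
          (fun y => hTb N y)
      _ = (N : ℝ) := by simp
  have hmul_meas1 : ∀ N, Measurable fun ω => (g (X 0 ω) : ℂ) * T N (X (n + 1) ω) := fun N =>
    hgmeasC.mul ((hTmeas N).comp (hXmeas (n + 1)))
  have hmul_meas2 : ∀ N, AEStronglyMeasurable
      (fun ω => (g (X 0 ω) : ℂ) * (∫ y, T N y ∂(κ (X n ω)))) P := fun N =>
    hgmeasC.aestronglyMeasurable.mul
      (((hkernInt_meas N).comp_measurable (hXmeas n)).aestronglyMeasurable)
  have hint1 : ∀ N, Integrable (fun ω => (g (X 0 ω) : ℂ) * T N (X (n + 1) ω)) P := fun N =>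
    (integrable_const (Mg * N)).mono' (hmul_meas1 N).aestronglyMeasurable
      (Filter.Eventually.of_forall fun ω => by
        rw [norm_mul, Complex.norm_real, Real.norm_eq_abs]
        exact mul_le_mul (hgb (X 0 ω)) (hTb N (X (n + 1) ω)) (norm_nonneg _)
          ((abs_nonneg (g (X 0 ω))).trans (hgb (X 0 ω))))
  have hint2 : ∀ N, Integrable
      (fun ω => (g (X 0 ω) : ℂ) * (∫ y, T N y ∂(κ (X n ω)))) P := fun N =>
    (integrable_const (Mg * N)).mono' (hmul_meas2 N)
      (Filter.Eventually.of_forall fun ω => by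
        rw [norm_mul, Complex.norm_real, Real.norm_eq_abs]
        exact mul_le_mul (hgb (X 0 ω)) (hkern_bd N (X n ω)) (norm_nonneg _)
          ((abs_nonneg (g (X 0 ω))).trans (hgb (X 0 ω))))
  have stepN : ∀ N : ℕ,
      ∫ ω, (g (X 0 ω) : ℂ) * T N (X (n + 1) ω) ∂P
        = ∫ ω, (g (X 0 ω) : ℂ) * (∫ y, T N y ∂(κ (X n ω))) ∂P := by
    intro N
    have hre := hMarkov n (fun y => (T N y).re)
      (Complex.measurable_re.comp (hTmeas N))
      ⟨N, fun y => (Complex.abs_re_le_norm _).trans (hTb N y)⟩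
      (fun v => g (v 0)) (hg.comp (measurable_pi_apply 0)) ⟨Mg, fun v => hgb _⟩
    have him := hMarkov n (fun y => (T N y).im)
      (Complex.measurable_im.comp (hTmeas N))
      ⟨N, fun y => (Complex.abs_im_le_norm _).trans (hTb N y)⟩
      (fun v => g (v 0)) (hg.comp (measurable_pi_apply 0)) ⟨Mg, fun v => hgb _⟩
    simp only [Fin.val_zero] at hre him
    have hre2 : ∫ ω, ((g (X 0 ω) : ℂ) * T N (X (n + 1) ω)).re ∂P
        = ∫ ω, ((g (X 0 ω) : ℂ) * (∫ y, T N y ∂(κ (X n ω)))).re ∂P := by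
      calc ∫ ω, ((g (X 0 ω) : ℂ) * T N (X (n + 1) ω)).re ∂P
          = ∫ ω, g (X 0 ω) * (T N (X (n + 1) ω)).re ∂P := by
            refine integral_congr_ae (Filter.Eventually.of_forall fun ω => ?_)
            simp [Complex.mul_re]
        _ = ∫ ω, g (X 0 ω) * (∫ y, (T N y).re ∂(κ (X n ω))) ∂P := hre
        _ = ∫ ω, ((g (X 0 ω) : ℂ) * (∫ y, T N y ∂(κ (X n ω)))).re ∂P := by
            refine integral_congr_ae (Filter.Eventually.of_forall fun ω => ?_)
            have h := integral_re (μ := κ (X n ω)) (hTint N (X n ω))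
            simp only [RCLike.re_to_complex] at h
            simp [Complex.mul_re, h]
    have him2 : ∫ ω, ((g (X 0 ω) : ℂ) * T N (X (n + 1) ω)).im ∂P
        = ∫ ω, ((g (X 0 ω) : ℂ) * (∫ y, T N y ∂(κ (X n ω)))).im ∂P := by
      calc ∫ ω, ((g (X 0 ω) : ℂ) * T N (X (n + 1) ω)).im ∂P
          = ∫ ω, g (X 0 ω) * (T N (X (n + 1) ω)).im ∂P := by
            refine integral_congr_ae (Filter.Eventually.of_forall fun ω => ?_)
            simp [Complex.mul_im]
        _ = ∫ ω, g (X 0 ω) * (∫ y, (T N y).im ∂(κ (X n ω))) ∂P := him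
        _ = ∫ ω, ((g (X 0 ω) : ℂ) * (∫ y, T N y ∂(κ (X n ω)))).im ∂P := by
            refine integral_congr_ae (Filter.Eventually.of_forall fun ω => ?_)
            have h := integral_im (μ := κ (X n ω)) (hTint N (X n ω))
            simp only [RCLike.im_to_complex] at h
            simp [Complex.mul_im, h]
    calc ∫ ω, (g (X 0 ω) : ℂ) * T N (X (n + 1) ω) ∂P
        = ((∫ ω, ((g (X 0 ω) : ℂ) * T N (X (n + 1) ω)).re ∂P : ℝ) : ℂ)
            + ((∫ ω, ((g (X 0 ω) : ℂ) * T N (X (n + 1) ω)).im ∂P : ℝ) : ℂ) * Complex.I := by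
          have h := integral_re_add_im (hint1 N)
          simp only [RCLike.re_to_complex, RCLike.im_to_complex, RCLike.I_to_complex] at h
          exact h.symm
      _ = ((∫ ω, ((g (X 0 ω) : ℂ) * (∫ y, T N y ∂(κ (X n ω)))).re ∂P : ℝ) : ℂ)
            + ((∫ ω, ((g (X 0 ω) : ℂ) * (∫ y, T N y ∂(κ (X n ω)))).im ∂P : ℝ) : ℂ)
              * Complex.I := by rw [hre2, him2]
      _ = ∫ ω, (g (X 0 ω) : ℂ) * (∫ y, T N y ∂(κ (X n ω))) ∂P := by
          have h := integral_re_add_im (hint2 N)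
          simp only [RCLike.re_to_complex, RCLike.im_to_complex, RCLike.I_to_complex] at h
          exact h
  -- the nnnorm kernel-integral function
  set G : 𝓧 → ℝ≥0∞ := fun x => ∫⁻ y, ‖F y‖₊ ∂(κ x) with hG
  have hGmeas : Measurable G := Measurable.lintegral_kernel (κ := κ) hF.nnnorm.coe_nnreal_ennreal
  have hGν : ∫⁻ x, G x ∂ν = ∫⁻ y, ‖F y‖₊ ∂ν := by
    have h := MeasureTheory.Measure.lintegral_bind (m := ν) (μ := fun x => κ x)
      (f := fun y => (‖F y‖₊ : ℝ≥0∞)) κ.measurable.aemeasurable hF.nnnorm.coe_nnreal_ennreal.aemeasurable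
    rw [hinv] at h
    exact h.symm
  have hGfin : ∀ᵐ x ∂ν, G x < ⊤ :=
    ae_lt_top hGmeas (by rw [hGν]; exact hFint.2.ne)
  have hPfin : ∀ᵐ ω ∂P, G (X n ω) < ⊤ :=
    MeasureTheory.ae_of_ae_map (hXmeas n).aemeasurable ((hmap n).symm ▸ hGfin)
  have T1 : Tendsto (fun N => ∫ ω, (g (X 0 ω) : ℂ) * T N (X (n + 1) ω) ∂P) atTop
      (nhds (∫ ω, (g (X 0 ω) : ℂ) * F (X (n + 1) ω) ∂P)) := by
    refine tendsto_integral_of_dominated_convergence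
      (fun ω => Mg * ‖F (X (n + 1) ω)‖)
      (fun N => (hmul_meas1 N).aestronglyMeasurable)
      (((aux_comp_integrable (hXmeas (n + 1)) (hmap (n + 1))
          hF.aestronglyMeasurable hFint).norm).const_mul Mg) ?_ ?_
    · intro N
      refine Filter.Eventually.of_forall fun ω => ?_
      rw [norm_mul, Complex.norm_real, Real.norm_eq_abs]
      exact mul_le_mul (hgb (X 0 ω)) (myTrunc_norm_le F N (X (n + 1) ω)) (norm_nonneg _)
        ((abs_nonneg (g (X 0 ω))).trans (hgb (X 0 ω)))
    · refine Filter.Eventually.of_forall fun ω => ?_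
      exact Tendsto.const_mul _ (myTrunc_tendsto F (X (n + 1) ω))
  have hbint : Integrable (fun ω => Mg * (G (X n ω)).toReal) P := by
    have h1 : Integrable (fun x => (G x).toReal) ν :=
      integrable_toReal_of_lintegral_ne_top hGmeas.aemeasurable
        (by rw [hGν]; exact hFint.2.ne)
    exact (aux_comp_integrable (hXmeas n) (hmap n)
      hGmeas.ennreal_toReal.aestronglyMeasurable h1).const_mul Mg
  have T2 : Tendsto (fun N => ∫ ω, (g (X 0 ω) : ℂ) * (∫ y, T N y ∂(κ (X n ω))) ∂P) atTop
      (nhds (∫ ω, (g (X 0 ω) : ℂ) * (∫ y, F y ∂(κ (X n ω))) ∂P)) := by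
    refine tendsto_integral_of_dominated_convergence
      (fun ω => Mg * (G (X n ω)).toReal) (fun N => hmul_meas2 N) hbint ?_ ?_
    · intro N
      filter_upwards [hPfin] with ω hω
      rw [norm_mul, Complex.norm_real, Real.norm_eq_abs]
      refine mul_le_mul (hgb (X 0 ω)) ?_ (norm_nonneg _)
        ((abs_nonneg (g (X 0 ω))).trans (hgb (X 0 ω)))
      calc ‖∫ y, T N y ∂(κ (X n ω))‖ ≤ ∫ y, ‖T N y‖ ∂(κ (X n ω)) :=
            norm_integral_le_integral_norm _
        _ = (∫⁻ y, ‖T N y‖₊ ∂(κ (X n ω))).toReal :=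
            integral_norm_eq_lintegral_enorm (hTmeas N).aestronglyMeasurable
        _ ≤ (G (X n ω)).toReal := by
            refine ENNReal.toReal_mono hω.ne (lintegral_mono fun y => ?_)
            exact ENNReal.coe_le_coe.2 (by
              simpa [← NNReal.coe_le_coe] using myTrunc_norm_le F N y)
    · filter_upwards [hPfin] with ω hω
      have hFx : Integrable F (κ (X n ω)) := ⟨hF.aestronglyMeasurable, hω⟩
      exact Tendsto.const_mul _
        (tendsto_integral_of_dominated_convergence (fun y => ‖F y‖)
          (fun N => (hTmeas N).aestronglyMeasurable) hFx.norm
          (fun N => Filter.Eventually.of_forall fun y => myTrunc_norm_le F N y)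
          (Filter.Eventually.of_forall fun y => myTrunc_tendsto F y))
  have T1' : Tendsto (fun N => ∫ ω, (g (X 0 ω) : ℂ) * (∫ y, T N y ∂(κ (X n ω))) ∂P) atTop
      (nhds (∫ ω, (g (X 0 ω) : ℂ) * F (X (n + 1) ω) ∂P)) := by
    have h := T1
    simp only [stepN] at h
    exact h
  exact tendsto_nhds_unique T1' T2

end AuxLemmas


/-- **Exponential covariance decay under geometric ergodicity**
(Lemma 6.3 of the paper).  Under conditions (A), (B), (C), there is `C > 0` such that
`|Cov(g(X₀), f(X_k))| ≤ C ‖g‖_{L^s(ν)} ‖f‖_B θ^k` for all `f ∈ B`, `g ∈ L^s(ν)` with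
`s = m/(m−1)`, where `Cov(g(X₀), f(X_k)) = E[g(X₀)(f(X_k) − νf)]`. -/
theorem exponential_covariance_decay
    {Ω 𝓧 B : Type} [MeasurableSpace Ω] [MeasurableSpace 𝓧]
    [NormedAddCommGroup B] [NormedSpace ℂ B] [CompleteSpace B]
    (P : MeasureTheory.Measure Ω) [MeasureTheory.IsProbabilityMeasure P]
    (X : ℕ → Ω → 𝓧) (hXmeas : ∀ i, Measurable (X i))
    (κ : ProbabilityTheory.Kernel 𝓧 𝓧) [ProbabilityTheory.IsMarkovKernel κ]
    (hMarkov : IsMarkovChain P X κ)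
    (ν : MeasureTheory.Measure 𝓧) [MeasureTheory.IsProbabilityMeasure ν]
    (hinv : ν.bind (fun x => κ x) = ν)
    (hinit : MeasureTheory.Measure.map (X 0) P = ν)
    (ι : B →ₗ[ℂ] 𝓧 → ℂ)
    (PB : B →L[ℂ] B) (hPB : MarkovOpCompat ι κ PB)
    (m s : ℝ≥0∞) (hm : 1 ≤ m) (hms : 1 / m + 1 / s = 1)
    (hA : CondA ι)
    (one : B) (hone : ι one = fun _ => 1)
    (hB : CondB ι ν m)
    (κc θ : ℝ) (hκc : 0 < κc) (hθ : θ ∈ Set.Ico (0:ℝ) 1)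
    (hC : CondC ι ν one PB κc θ) :
    ∃ C : ℝ, 0 < C ∧ ∀ b : B, ∀ g : 𝓧 → ℝ, MeasureTheory.MemLp g s ν → ∀ k : ℕ,
      ‖∫ ω, (g (X 0 ω) : ℂ) * (ι b (X k ω) - ∫ x, ι b x ∂ν) ∂P‖
        ≤ C * (MeasureTheory.eLpNorm g s ν).toReal * ‖b‖ * θ ^ k := by
    classical
  obtain ⟨K, hK, hKb⟩ := hB
  have hmap : ∀ n, MeasureTheory.Measure.map (X n) P = ν :=
    aux_marginals P X hXmeas κ hMarkov ν hinv hinit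
  have hmeasι : ∀ b' : B, Measurable (ι b') := hA.1
  have hmem : ∀ b' : B, MeasureTheory.MemLp (ι b') m ν := fun b' =>
    ⟨(hmeasι b').aestronglyMeasurable, (hKb b').trans_lt ENNReal.ofReal_lt_top⟩
  have hL1 : ∀ b' : B, MeasureTheory.Integrable (ι b') ν := fun b' =>
    MeasureTheory.memLp_one_iff_integrable.mp ((hmem b').mono_exponent hm)
  have hms' : 1 / s + 1 / m = 1 := by rw [add_comm]; exact hms
  refine ⟨K * κc, mul_pos hK hκc, ?_⟩
  intro b g hg k
  set c : ℂ := ∫ x, ι b x ∂ν with hc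
  set bk : B := (PB ^ k) b - c • one with hbk
  have hιbk : ∀ x, ι bk x = ι ((PB ^ k) b) x - c := by
    intro x
    rw [hbk]
    simp [map_sub, _root_.map_smul, hone, Pi.sub_apply, Pi.smul_apply, smul_eq_mul]
  have hnorm_bk : ‖bk‖ ≤ κc * ‖b‖ * θ ^ k := hC b k
  -- the iterated Markov identity
  have key : ∀ (j : ℕ) (b' : B) (g' : 𝓧 → ℝ), Measurable g' → (∃ M, ∀ x, |g' x| ≤ M) →
      ∫ ω, (g' (X 0 ω) : ℂ) * ι b' (X j ω) ∂P
        = ∫ ω, (g' (X 0 ω) : ℂ) * ι ((PB ^ j) b') (X 0 ω) ∂P := by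
    intro j
    induction j with
    | zero =>
      intro b' g' _ _
      simp [pow_zero, ContinuousLinearMap.one_apply]
    | succ j ih =>
      intro b' g' hg' hgb'
      obtain ⟨M, hM⟩ := hgb'
      have hstep := aux_markov_step P X hXmeas κ hMarkov ν hinv hmap j g' hg' M hM
        (ι b') (hmeasι b') (hL1 b')
      have hpow : (PB ^ (j + 1)) b' = (PB ^ j) (PB b') := by
        rw [pow_succ, ContinuousLinearMap.mul_apply]
      have e : ∫ ω, (g' (X 0 ω) : ℂ) * (∫ y, ι b' y ∂(κ (X j ω))) ∂P
          = ∫ ω, (g' (X 0 ω) : ℂ) * ι (PB b') (X j ω) ∂P := by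
        refine integral_congr_ae (Eventually.of_forall fun ω => ?_)
        dsimp only
        rw [hPB b' (X j ω)]
      rw [hpow, hstep, e]
      exact ih (PB b') g' hg' ⟨M, hM⟩
  -- the covariance identity for bounded observables
  have hbdd_id : ∀ (g' : 𝓧 → ℝ), Measurable g' → ∀ M : ℝ, (∀ x, |g' x| ≤ M) →
      ∫ ω, (g' (X 0 ω) : ℂ) * (ι b (X k ω) - c) ∂P = ∫ x, (g' x : ℂ) * ι bk x ∂ν := by
    intro g' hg' M hM
    have hgmeasC : Measurable fun ω => (g' (X 0 ω) : ℂ) :=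
      Complex.measurable_ofReal.comp (hg'.comp (hXmeas 0))
    have hcompbk : ∀ (b'' : B) (j : ℕ),
        MeasureTheory.Integrable (fun ω => ι b'' (X j ω)) P := fun b'' j =>
      aux_comp_integrable (hXmeas j) (hmap j) (hmeasι b'').aestronglyMeasurable (hL1 b'')
    have hint1 : Integrable (fun ω => (g' (X 0 ω) : ℂ) * ι b (X k ω)) P :=
      (((hcompbk b k).norm.const_mul M).mono'
        (hgmeasC.mul ((hmeasι b).comp (hXmeas k))).aestronglyMeasurable
        (Eventually.of_forall fun ω => by
          rw [norm_mul, Complex.norm_real, Real.norm_eq_abs]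
          exact mul_le_mul_of_nonneg_right (hM (X 0 ω)) (norm_nonneg _)))
    have hint2 : Integrable (fun ω => (g' (X 0 ω) : ℂ) * c) P :=
      ((integrable_const (M * ‖c‖)).mono' (hgmeasC.mul_const c).aestronglyMeasurable
        (Eventually.of_forall fun ω => by
          rw [norm_mul, Complex.norm_real, Real.norm_eq_abs]
          exact mul_le_mul_of_nonneg_right (hM (X 0 ω)) (norm_nonneg _)))
    have hint3 : Integrable (fun ω => (g' (X 0 ω) : ℂ) * ι ((PB ^ k) b) (X 0 ω)) P :=
      (((hcompbk ((PB ^ k) b) 0).norm.const_mul M).mono'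
        (hgmeasC.mul ((hmeasι ((PB ^ k) b)).comp (hXmeas 0))).aestronglyMeasurable
        (Eventually.of_forall fun ω => by
          rw [norm_mul, Complex.norm_real, Real.norm_eq_abs]
          exact mul_le_mul_of_nonneg_right (hM (X 0 ω)) (norm_nonneg _)))
    calc ∫ ω, (g' (X 0 ω) : ℂ) * (ι b (X k ω) - c) ∂P
        = ∫ ω, ((g' (X 0 ω) : ℂ) * ι b (X k ω) - (g' (X 0 ω) : ℂ) * c) ∂P := by
          refine integral_congr_ae (Eventually.of_forall fun ω => ?_)
          ring
      _ = (∫ ω, (g' (X 0 ω) : ℂ) * ι b (X k ω) ∂P) - ∫ ω, (g' (X 0 ω) : ℂ) * c ∂P :=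
          integral_sub hint1 hint2
      _ = (∫ ω, (g' (X 0 ω) : ℂ) * ι ((PB ^ k) b) (X 0 ω) ∂P)
            - ∫ ω, (g' (X 0 ω) : ℂ) * c ∂P := by
          rw [key k b g' hg' ⟨M, hM⟩]
      _ = ∫ ω, ((g' (X 0 ω) : ℂ) * ι ((PB ^ k) b) (X 0 ω) - (g' (X 0 ω) : ℂ) * c) ∂P :=
          (integral_sub hint3 hint2).symm
      _ = ∫ ω, (g' (X 0 ω) : ℂ) * ι bk (X 0 ω) ∂P := by
          refine integral_congr_ae (Eventually.of_forall fun ω => ?_)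
          dsimp only
          rw [hιbk]
          ring
      _ = ∫ x, (g' x : ℂ) * ι bk x ∂ν := by
          have h := MeasureTheory.integral_map (μ := P) (φ := X 0) (hXmeas 0).aemeasurable
            (f := fun x => (g' x : ℂ) * ι bk x)
            (by
              rw [hinit]
              exact ((Complex.measurable_ofReal.comp hg').mul (hmeasι bk)).aestronglyMeasurable)
          rw [hinit] at h
          exact h.symm
  -- measurable representative of g
  obtain ⟨g', hg'sm, hgg'⟩ := hg.1
  have hg'meas : Measurable g' := hg'sm.measurable
  have hg'mem : MeasureTheory.MemLp g' s ν := hg.ae_eq hgg'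
  set gN : ℕ → 𝓧 → ℝ := fun N => myTrunc g' N with hgN
  have hgNb : ∀ N x, |gN N x| ≤ (N : ℝ) := fun N x => by
    have h := myTrunc_norm_le_coe g' N x
    rwa [Real.norm_eq_abs] at h
  have hid : ∀ N, ∫ ω, (gN N (X 0 ω) : ℂ) * (ι b (X k ω) - c) ∂P
      = ∫ x, (gN N x : ℂ) * ι bk x ∂ν :=
    fun N => hbdd_id (gN N) (myTrunc_measurable hg'meas N) N (hgNb N)
  have hg'P : MeasureTheory.MemLp (fun ω => g' (X 0 ω)) s P :=
    aux_comp_memℒp (hXmeas 0) hinit hg'sm.aestronglyMeasurable hg'mem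
  have hbP : MeasureTheory.MemLp (fun ω => ‖ι b (X k ω)‖ + ‖c‖) m P := by
    have h1 : MeasureTheory.MemLp (fun ω => ι b (X k ω)) m P :=
      aux_comp_memℒp (hXmeas k) (hmap k) (hmeasι b).aestronglyMeasurable (hmem b)
    exact h1.norm.add (memLp_const _)
  have hbound1 : Integrable (fun ω => ‖g' (X 0 ω)‖ * (‖ι b (X k ω)‖ + ‖c‖)) P :=
    aux_integrable_mul hms' hg'P.norm hbP
  have T1 : Tendsto (fun N => ∫ ω, (gN N (X 0 ω) : ℂ) * (ι b (X k ω) - c) ∂P) atTop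
      (nhds (∫ ω, (g' (X 0 ω) : ℂ) * (ι b (X k ω) - c) ∂P)) := by
    refine tendsto_integral_of_dominated_convergence
      (fun ω => ‖g' (X 0 ω)‖ * (‖ι b (X k ω)‖ + ‖c‖)) ?_ hbound1 ?_ ?_
    · intro N
      exact ((Complex.measurable_ofReal.comp
        ((myTrunc_measurable hg'meas N).comp (hXmeas 0))).mul
        (((hmeasι b).comp (hXmeas k)).sub measurable_const)).aestronglyMeasurable
    · intro N
      refine Eventually.of_forall fun ω => ?_
      rw [norm_mul, Complex.norm_real]
      exact mul_le_mul (myTrunc_norm_le g' N (X 0 ω)) (norm_sub_le _ _)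
        (norm_nonneg _) (norm_nonneg _)
    · refine Eventually.of_forall fun ω => ?_
      exact Tendsto.mul_const _
        ((Complex.continuous_ofReal.tendsto _).comp (myTrunc_tendsto g' (X 0 ω)))
  have hbkmem : MeasureTheory.MemLp (ι bk) m ν := hmem bk
  have hbound2 : Integrable (fun x => ‖g' x‖ * ‖ι bk x‖) ν :=
    aux_integrable_mul hms' hg'mem.norm hbkmem.norm
  have T2 : Tendsto (fun N => ∫ x, (gN N x : ℂ) * ι bk x ∂ν) atTop
      (nhds (∫ x, (g' x : ℂ) * ι bk x ∂ν)) := by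
    refine tendsto_integral_of_dominated_convergence
      (fun x => ‖g' x‖ * ‖ι bk x‖) ?_ hbound2 ?_ ?_
    · intro N
      exact ((Complex.measurable_ofReal.comp (myTrunc_measurable hg'meas N)).mul
        (hmeasι bk)).aestronglyMeasurable
    · intro N
      refine Eventually.of_forall fun x => ?_
      rw [norm_mul, Complex.norm_real]
      exact mul_le_mul_of_nonneg_right (myTrunc_norm_le g' N x) (norm_nonneg _)
    · refine Eventually.of_forall fun x => ?_
      exact Tendsto.mul_const _
        ((Complex.continuous_ofReal.tendsto _).comp (myTrunc_tendsto g' x))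
  have main_id : ∫ ω, (g' (X 0 ω) : ℂ) * (ι b (X k ω) - c) ∂P
      = ∫ x, (g' x : ℂ) * ι bk x ∂ν := by
    have h := T1
    simp only [hid] at h
    exact tendsto_nhds_unique h T2
  have hae : (fun ω => g (X 0 ω)) =ᵐ[P] (fun ω => g' (X 0 ω)) :=
    MeasureTheory.ae_eq_comp (f := X 0) (hXmeas 0).aemeasurable
      (g := g) (g' := g') (hinit.symm ▸ hgg')
  have hP_eq : ∫ ω, (g (X 0 ω) : ℂ) * (ι b (X k ω) - c) ∂P
      = ∫ x, (g' x : ℂ) * ι bk x ∂ν := by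
    rw [← main_id]
    refine integral_congr_ae ?_
    filter_upwards [hae] with ω hω
    rw [hω]
  rw [hP_eq]
  -- Hölder and the geometric estimate
  have hfmeas : AEStronglyMeasurable (fun x => (g' x : ℂ) * ι bk x) ν :=
    ((Complex.measurable_ofReal.comp hg'meas).mul (hmeasι bk)).aestronglyMeasurable
  have hpqr : (1 : ℝ≥0∞) / 1 = 1 / s + 1 / m := by rw [div_one]; exact hms'.symm
  have hHold : eLpNorm (fun x => (g' x : ℂ) * ι bk x) 1 ν
      ≤ eLpNorm g' s ν * eLpNorm (ι bk) m ν :=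
    by
      have h := eLpNorm_le_eLpNorm_mul_eLpNorm'_of_norm hg'mem.1 hbkmem.1
        (fun (r : ℝ) (z : ℂ) => (r : ℂ) * z) 1 (p := s) (q := m) (r := 1)
        (Eventually.of_forall fun x => by simp [norm_mul])
        (hpqr := ⟨by simpa [one_div] using hpqr.symm⟩)
      rwa [ENNReal.coe_one, one_mul] at h
  have hne1 : eLpNorm g' s ν ≠ ⊤ := hg'mem.2.ne
  have hne2 : eLpNorm (ι bk) m ν ≠ ⊤ := ((hKb bk).trans_lt ENNReal.ofReal_lt_top).ne
  have habs : ‖∫ x, (g' x : ℂ) * ι bk x ∂ν‖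
      ≤ (eLpNorm g' s ν).toReal * (eLpNorm (ι bk) m ν).toReal := by
    calc ‖∫ x, (g' x : ℂ) * ι bk x ∂ν‖
        ≤ ∫ x, ‖(g' x : ℂ) * ι bk x‖ ∂ν := norm_integral_le_integral_norm _
      _ = (∫⁻ x, ‖(g' x : ℂ) * ι bk x‖₊ ∂ν).toReal := integral_norm_eq_lintegral_enorm hfmeas
      _ = (eLpNorm (fun x => (g' x : ℂ) * ι bk x) 1 ν).toReal := by
          rw [eLpNorm_one_eq_lintegral_enorm]; rfl
      _ ≤ (eLpNorm g' s ν * eLpNorm (ι bk) m ν).toReal :=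
          ENNReal.toReal_mono (ENNReal.mul_ne_top hne1 hne2) hHold
      _ = (eLpNorm g' s ν).toReal * (eLpNorm (ι bk) m ν).toReal := ENNReal.toReal_mul
  have hgnorm : eLpNorm g' s ν = eLpNorm g s ν := (eLpNorm_congr_ae hgg').symm
  have hbk_e : (eLpNorm (ι bk) m ν).toReal ≤ K * ‖bk‖ :=
    ENNReal.toReal_le_of_le_ofReal (by positivity) (hKb bk)
  calc ‖∫ x, (g' x : ℂ) * ι bk x ∂ν‖
      ≤ (eLpNorm g s ν).toReal * (K * ‖bk‖) := by
        rw [← hgnorm]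
        exact le_trans habs (mul_le_mul_of_nonneg_left hbk_e ENNReal.toReal_nonneg)
    _ ≤ (eLpNorm g s ν).toReal * (K * (κc * ‖b‖ * θ ^ k)) := by
        refine mul_le_mul_of_nonneg_left ?_ ENNReal.toReal_nonneg
        exact mul_le_mul_of_nonneg_left hnorm_bk hK.le
    _ = K * κc * (eLpNorm g s ν).toReal * ‖b‖ * θ ^ k := by ring
end

section
/- Asymptotics of the two-sample comparison process: Let (X_i)_{i≥0} be an X-valued stationary process with marginal distribution μ and F a uniformly bounded class of measurable real functions on X. For f ∈ F set F_j(f) = j^{−1} Σ_{i=1}^{j} f(X_i) for 1 ≤ j ≤ n (with F_0 = 0), F_{j,n}(f) = (n−j+1)^{−1} Σ_{i=j}^n f(X_i) for 1 ≤ j ≤ n (with F_{n+1,n} = 0), and define R_n(f,t) = √n · ([nt]/n) · ((n−[nt])/n) · ( F_{[nt]}(f) − F_{[nt]+1,n}(f) ) for (f,t) ∈ F×[0,1]. If the sequential empirical process U_n converges in distribution in ℓ^∞(F×[0,1]) to a tight centred Gaussian process K, then R_n converges in distribution in ℓ^∞(F×[0,1]) to the process ( K(f,t) − t·K(f,1)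 )_{(f,t)∈F×[0,1]}. -/
open MeasureTheory Filter ProbabilityTheory
open scoped ENNReal NNReal

open SECLT

namespace SECLT

/-- The two-sample comparison process
`R_n(f,t) = √n (⌊nt⌋/n)((n−⌊nt⌋)/n)(F_{⌊nt⌋}(f) − F_{⌊nt⌋+1,n}(f))`. -/
noncomputable def twoSampleProc {Ω 𝓧 : Type*} (X : ℕ → Ω → 𝓧) (F : Set (𝓧 → ℝ))
    (n : ℕ) (ω : Ω) : (↥F × ↥(Set.Icc (0:ℝ) 1)) → ℝ :=
  fun p =>
    Real.sqrt (n : ℝ) * ((⌊(n : ℝ) * (p.2 : ℝ)⌋₊ : ℝ) / n)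
      * (((n : ℝ) - (⌊(n : ℝ) * (p.2 : ℝ)⌋₊ : ℝ)) / n)
      * (((⌊(n : ℝ) * (p.2 : ℝ)⌋₊ : ℝ))⁻¹
            * (∑ i ∈ Finset.Icc 1 ⌊(n : ℝ) * (p.2 : ℝ)⌋₊, (p.1 : 𝓧 → ℝ) (X i ω))
        - ((n : ℝ) - (⌊(n : ℝ) * (p.2 : ℝ)⌋₊ : ℝ))⁻¹
            * ∑ i ∈ Finset.Icc (⌊(n : ℝ) * (p.2 : ℝ)⌋₊ + 1) n, (p.1 : 𝓧 → ℝ) (X i ω))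

end SECLT


namespace SECLT
namespace Aux

/-! ### Basic properties of `supDist` -/

variable {S : Type*}

lemma supDist_self (x : S → ℝ) : supDist x x = 0 := by simp [supDist]

lemma supDist_comm (x y : S → ℝ) : supDist x y = supDist y x := by
  simp [supDist, abs_sub_comm]

lemma supDist_triangle (x y z : S → ℝ) : supDist x z ≤ supDist x y + supDist y z := by
  refine iSup_le fun s => ?_
  calc ENNReal.ofReal |x s - z s| ≤ ENNReal.ofReal (|x s - y s| + |y s - z s|) :=
        ENNReal.ofReal_le_ofReal (abs_sub_le _ _ _)
    _ ≤ ENNReal.ofReal |x s - y s| + ENNReal.ofReal |y s - z s| := ENNReal.ofReal_add_le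
    _ ≤ supDist x y + supDist y z :=
        add_le_add (le_iSup (fun s => ENNReal.ofReal |x s - y s|) s)
          (le_iSup (fun s => ENNReal.ofReal |y s - z s|) s)

lemma supDist_le_ofReal {x y : S → ℝ} {r : ℝ} (h : ∀ s, |x s - y s| ≤ r) :
    supDist x y ≤ ENNReal.ofReal r :=
  iSup_le fun s => ENNReal.ofReal_le_ofReal (h s)

lemma abs_le_of_supDist_le {x y : S → ℝ} {r : ℝ} (hr : 0 ≤ r)
    (h : supDist x y ≤ ENNReal.ofReal r) (s : S) : |x s - y s| ≤ r := by
  have := le_trans (le_iSup (fun s => ENNReal.ofReal |x s - y s|) s) h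
  rwa [ENNReal.ofReal_le_ofReal_iff hr] at this

/-! ### The sup extended metric space of functions -/

/-- Wrapper for `S → ℝ` endowed with the sup extended metric. -/
@[ext] structure BddFun (S : Type*) where
  toFun : S → ℝ

noncomputable instance : EMetricSpace (BddFun S) where
  edist x y := supDist x.toFun y.toFun
  edist_self x := supDist_self x.toFun
  edist_comm x y := supDist_comm x.toFun y.toFun
  edist_triangle x y z := supDist_triangle x.toFun y.toFun z.toFun
  eq_of_edist_eq_zero := by
    intro x y h
    ext s
    have hs : ENNReal.ofReal |x.toFun s - y.toFun s| = 0 := by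
      have := le_trans (le_iSup (fun s => ENNReal.ofReal |x.toFun s - y.toFun s|) s) h.le
      simpa using this
    have h1 : |x.toFun s - y.toFun s| ≤ 0 := by simpa using ENNReal.ofReal_eq_zero.mp hs
    have h2 := abs_nonneg (x.toFun s - y.toFun s)
    have h3 : |x.toFun s - y.toFun s| = 0 := le_antisymm h1 h2
    have := abs_eq_zero.mp h3
    linarith

lemma edist_def (x y : BddFun S) : edist x y = supDist x.toFun y.toFun := rfl

instance : CompleteSpace (BddFun S) := by
  apply EMetric.complete_of_convergent_controlled_sequences
      (fun n => ENNReal.ofReal ((1/2 : ℝ) ^ n)) (fun n => by positivity)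
  intro u hu
  have key : ∀ (N n : ℕ), N ≤ n → ∀ s, |(u n).toFun s - (u N).toFun s| ≤ (1/2 : ℝ) ^ N := by
    intro N n hn s
    have h := (hu N n N hn le_rfl).le
    rw [edist_def] at h
    exact abs_le_of_supDist_le (by positivity) h s
  have hcau : ∀ s : S, ∃ l : ℝ, Tendsto (fun n => (u n).toFun s) atTop (nhds l) := by
    intro s
    apply cauchySeq_tendsto_of_complete
    rw [Metric.cauchySeq_iff']
    intro ε hε
    obtain ⟨N, hN⟩ := exists_pow_lt_of_lt_one hε (by norm_num : (1/2:ℝ) < 1)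
    exact ⟨N, fun n hn => lt_of_le_of_lt (by simpa [Real.dist_eq] using key N n hn s) hN⟩
  choose x hx using hcau
  refine ⟨⟨x⟩, ?_⟩
  rw [EMetric.tendsto_atTop]
  intro ε hε
  obtain ⟨N, hN⟩ := ENNReal.exists_inv_two_pow_lt hε.ne'
  refine ⟨N + 1, fun n hn => ?_⟩
  have hb : ∀ s, |(u n).toFun s - x s| ≤ (1/2 : ℝ) ^ N := by
    intro s
    have ht : Tendsto (fun m => |(u n).toFun s - (u m).toFun s|) atTop
        (nhds |(u n).toFun s - x s|) :=
      (tendsto_const_nhds.sub (hx s)).abs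
    refine le_of_tendsto ht (eventually_atTop.2 ⟨N + 1, fun m hm => ?_⟩)
    have h1 := key (N+1) n hn s
    have h2 := key (N+1) m hm s
    calc |(u n).toFun s - (u m).toFun s|
        ≤ |(u n).toFun s - (u (N+1)).toFun s| + |(u (N+1)).toFun s - (u m).toFun s| :=
          abs_sub_le _ _ _
      _ ≤ (1/2:ℝ)^(N+1) + (1/2:ℝ)^(N+1) := by
          rw [abs_sub_comm] at h2; exact add_le_add h1 h2
      _ = (1/2:ℝ)^N := by ring
  calc edist (u n) (⟨x⟩ : BddFun S) ≤ ENNReal.ofReal ((1/2:ℝ)^N) := by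
        rw [edist_def]; exact supDist_le_ofReal hb
    _ = 2⁻¹ ^ N := by
        rw [ENNReal.ofReal_pow (by norm_num)]
        congr 1
        rw [ENNReal.ofReal_div_of_pos (by norm_num)]
        simp
    _ < ε := hN

lemma totallyBounded_of_sup (T : Set (S → ℝ))
    (hT : SupTotallyBounded T) : TotallyBounded (BddFun.mk '' T) := by
  rw [EMetric.totallyBounded_iff]
  intro ε hε
  obtain ⟨ε', hε'0, hε'ε⟩ : ∃ ε' : ℝ, 0 < ε' ∧ ENNReal.ofReal ε' < ε := by
    rcases eq_or_ne ε ⊤ with rfl | hne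
    · exact ⟨1, by norm_num, by simp⟩
    · have htr := ENNReal.toReal_pos hε.ne' hne
      refine ⟨ε.toReal / 2, by linarith, ?_⟩
      rw [ENNReal.ofReal_lt_iff_lt_toReal (by linarith) hne]
      linarith
  obtain ⟨A, hA⟩ := hT ε' hε'0
  refine ⟨BddFun.mk '' (A : Set (S → ℝ)), (A.finite_toSet).image _, ?_⟩
  rintro _ ⟨x, hx, rfl⟩
  obtain ⟨y, hyA, hxy⟩ := hA x hx
  refine Set.mem_biUnion (Set.mem_image_of_mem _ hyA) (EMetric.mem_ball.mpr ?_)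
  show edist (BddFun.mk x) (BddFun.mk y) < ε
  rw [edist_def]
  exact lt_of_le_of_lt hxy hε'ε

/-- Uniform continuity of a sup-continuous functional near a totally bounded set. -/
lemma uniform_near (T : Set (S → ℝ)) (hTB : SupTotallyBounded T)
    {φ : (S → ℝ) → ℝ} (hφ : SupContinuous φ) {ε : ℝ} (hε : 0 < ε) :
    ∃ δ : ℝ, 0 < δ ∧ ∀ x ∈ T, ∀ y : S → ℝ,
      supDist x y ≤ ENNReal.ofReal δ → |φ x - φ y| ≤ ε := by
  rcases T.eq_empty_or_nonempty with rfl | ⟨x₀, hx₀⟩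
  · exact ⟨1, one_pos, fun x hx => absurd hx (by simp)⟩
  have hC : IsCompact (closure (BddFun.mk '' T)) :=
    TotallyBounded.isCompact_of_isClosed (totallyBounded_of_sup T hTB).closure
      isClosed_closure
  have hδfun : ∀ x : BddFun S, ∃ δ : ℝ, 0 < δ ∧
      ∀ y : S → ℝ, supDist x.toFun y ≤ ENNReal.ofReal δ → |φ x.toFun - φ y| ≤ ε/2 :=
    fun x => hφ x.toFun (ε/2) (by positivity)
  choose δf hδf0 hδf using hδfun
  obtain ⟨t, htC, hcov⟩ := hC.elim_nhds_subcover
      (fun x => EMetric.ball x (ENNReal.ofReal (δf x / 2)))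
      (fun x _ => EMetric.ball_mem_nhds x (by
        have := hδf0 x
        rw [ENNReal.ofReal_pos]; linarith))
  have htne : t.Nonempty := by
    rcases Finset.eq_empty_or_nonempty t with rfl | h
    · exfalso
      have hmem : BddFun.mk x₀ ∈ closure (BddFun.mk '' T) :=
        subset_closure (Set.mem_image_of_mem _ hx₀)
      have := hcov hmem
      simpa using this
    · exact h
  refine ⟨t.inf' htne (fun z => δf z / 2), ?_, ?_⟩
  · obtain ⟨z, hz, hzeq⟩ := Finset.exists_mem_eq_inf' htne (fun z => δf z / 2)
    rw [hzeq]; have := hδf0 z; linarith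
  · intro x hx y hxy
    have hxC : BddFun.mk x ∈ closure (BddFun.mk '' T) :=
      subset_closure (Set.mem_image_of_mem _ hx)
    obtain ⟨z, hzt, hxz⟩ := Set.mem_iUnion₂.mp (hcov hxC)
    have hδz : t.inf' htne (fun z => δf z / 2) ≤ δf z / 2 :=
      Finset.inf'_le _ hzt
    have hzx : supDist z.toFun x ≤ ENNReal.ofReal (δf z / 2) := by
      change edist (BddFun.mk x) z < _ at hxz
      rw [edist_comm, edist_def] at hxz
      exact hxz.le
    have hzy : supDist z.toFun y ≤ ENNReal.ofReal (δf z) := by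
      calc supDist z.toFun y ≤ supDist z.toFun x + supDist x y := supDist_triangle _ _ _
        _ ≤ ENNReal.ofReal (δf z / 2) + ENNReal.ofReal (δf z / 2) :=
            add_le_add hzx (le_trans hxy (ENNReal.ofReal_le_ofReal hδz))
        _ = ENNReal.ofReal (δf z) := by
            rw [← ENNReal.ofReal_add (by have := hδf0 z; linarith) (by have := hδf0 z; linarith)]
            norm_num
    have h1 := hδf z x (le_trans hzx (ENNReal.ofReal_le_ofReal (by have := hδf0 z; linarith)))
    have h2 := hδf z y hzy
    calc |φ x - φ y| ≤ |φ z.toFun - φ x| + |φ z.toFun - φ y| := by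
          rw [abs_sub_comm (φ z.toFun) (φ x)]; exact abs_sub_le _ _ _
      _ ≤ ε/2 + ε/2 := add_le_add h1 h2
      _ = ε := by ring

/-! ### Truncated distance to a set and the cutoff functional -/

noncomputable def DT (T : Set (S → ℝ)) (x : S → ℝ) : ℝ≥0∞ := ⨅ z : T, supDist x (z : S → ℝ)

noncomputable def hcut (T : Set (S → ℝ)) (δ : ℝ) (x : S → ℝ) : ℝ :=
  min 1 ((2/δ) * (min (DT T x) (ENNReal.ofReal δ)).toReal)

lemma hcut_nonneg (T : Set (S → ℝ)) {δ : ℝ} (hδ : 0 < δ) (x : S → ℝ) : 0 ≤ hcut T δ x :=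
  le_min zero_le_one (by positivity)

lemma hcut_le_one (T : Set (S → ℝ)) (δ : ℝ) (x : S → ℝ) : hcut T δ x ≤ 1 := min_le_left _ _

lemma hcut_eq_zero (T : Set (S → ℝ)) (δ : ℝ) {x : S → ℝ} (hx : x ∈ T) : hcut T δ x = 0 := by
  have hD : DT T x = 0 := by
    refine le_antisymm ?_ zero_le
    have := iInf_le (fun z : T => supDist x (z : S → ℝ)) ⟨x, hx⟩
    simpa [DT, supDist_self] using this
  simp [hcut, hD]

lemma hcut_eq_one (T : Set (S → ℝ)) {δ : ℝ} (hδ : 0 < δ) {x : S → ℝ}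
    (hD : ENNReal.ofReal (δ/2) ≤ DT T x) : hcut T δ x = 1 := by
  have hm : ENNReal.ofReal (δ/2) ≤ min (DT T x) (ENNReal.ofReal δ) :=
    le_min hD (ENNReal.ofReal_le_ofReal (by linarith))
  have hfin : min (DT T x) (ENNReal.ofReal δ) ≠ ⊤ :=
    ne_top_of_le_ne_top ENNReal.ofReal_ne_top (min_le_right _ _)
  have h2 : δ/2 ≤ (min (DT T x) (ENNReal.ofReal δ)).toReal :=
    (ENNReal.ofReal_le_iff_le_toReal hfin).mp hm
  have h3 : (1:ℝ) ≤ (2/δ) * (min (DT T x) (ENNReal.ofReal δ)).toReal := by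
    rw [div_mul_eq_mul_div, le_div_iff₀ hδ]
    linarith
  simp [hcut, min_eq_left h3]

lemma DT_lip (T : Set (S → ℝ)) (x y : S → ℝ) : DT T x ≤ supDist x y + DT T y := by
  simp only [DT]
  rw [ENNReal.add_iInf]
  exact le_iInf fun z => le_trans (iInf_le _ z) (supDist_triangle _ _ _)

lemma min_lip (c a b : ℝ) : |min c a - min c b| ≤ |a - b| := by
  rcases le_total c a with h1 | h1 <;> rcases le_total c b with h2 | h2
  · rw [min_eq_left h1, min_eq_left h2]; simpa using abs_nonneg (a - b)
  · rw [min_eq_left h1, min_eq_right h2, abs_le]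
    rcases abs_cases (a - b) with ⟨he, hs⟩ | ⟨he, hs⟩ <;> constructor <;> linarith
  · rw [min_eq_right h1, min_eq_left h2, abs_le]
    rcases abs_cases (a - b) with ⟨he, hs⟩ | ⟨he, hs⟩ <;> constructor <;> linarith
  · rw [min_eq_right h1, min_eq_right h2]

lemma trunc_lip (T : Set (S → ℝ)) {δ r : ℝ} (hr : 0 ≤ r) {x y : S → ℝ}
    (hxy : supDist x y ≤ ENNReal.ofReal r) :
    (min (DT T x) (ENNReal.ofReal δ)).toReal
      ≤ (min (DT T y) (ENNReal.ofReal δ)).toReal + r := by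
  have h1 : min (DT T x) (ENNReal.ofReal δ)
      ≤ min (DT T y) (ENNReal.ofReal δ) + ENNReal.ofReal r := by
    have hA : min (DT T x) (ENNReal.ofReal δ) ≤ DT T y + ENNReal.ofReal r := by
      refine le_trans (min_le_left _ _) (le_trans (DT_lip T x y) ?_)
      rw [add_comm]
      exact add_le_add le_rfl hxy
    have hB : min (DT T x) (ENNReal.ofReal δ) ≤ ENNReal.ofReal δ + ENNReal.ofReal r :=
      le_trans (min_le_right _ _) le_self_add
    calc min (DT T x) (ENNReal.ofReal δ)
        ≤ min (DT T y + ENNReal.ofReal r) (ENNReal.ofReal δ + ENNReal.ofReal r) :=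
          le_min hA hB
      _ = min (DT T y) (ENNReal.ofReal δ) + ENNReal.ofReal r := min_add_add_right _ _ _
  have hfin : min (DT T y) (ENNReal.ofReal δ) + ENNReal.ofReal r ≠ ⊤ := by
    refine ENNReal.add_ne_top.mpr ⟨?_, ENNReal.ofReal_ne_top⟩
    exact ne_top_of_le_ne_top ENNReal.ofReal_ne_top (min_le_right _ _)
  have := ENNReal.toReal_mono hfin h1
  rwa [ENNReal.toReal_add (ne_top_of_le_ne_top hfin le_self_add) ENNReal.ofReal_ne_top,
    ENNReal.toReal_ofReal hr] at this

lemma hcut_lip (T : Set (S → ℝ)) {δ r : ℝ} (hδ : 0 < δ) (hr : 0 ≤ r) {x y : S → ℝ}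
    (hxy : supDist x y ≤ ENNReal.ofReal r) : |hcut T δ x - hcut T δ y| ≤ (2/δ) * r := by
  have h1 := trunc_lip T (δ := δ) hr hxy
  have h2 := trunc_lip T (δ := δ) hr (by rw [supDist_comm]; exact hxy)
  set ax := (min (DT T x) (ENNReal.ofReal δ)).toReal
  set ay := (min (DT T y) (ENNReal.ofReal δ)).toReal
  have habs : |(2/δ) * ax - (2/δ) * ay| ≤ (2/δ) * r := by
    rw [← mul_sub, abs_mul, abs_of_nonneg (by positivity : (0:ℝ) ≤ 2/δ)]
    refine mul_le_mul_of_nonneg_left ?_ (by positivity)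
    rw [abs_le]
    constructor <;> linarith
  exact le_trans (min_lip 1 _ _) habs

lemma exists_near (T : Set (S → ℝ)) {a b : ℝ} (hb : 0 < b) (hab : a < b) {x : S → ℝ}
    (hD : DT T x ≤ ENNReal.ofReal a) : ∃ z ∈ T, supDist x z ≤ ENNReal.ofReal b := by
  have hlt : DT T x < ENNReal.ofReal b :=
    lt_of_le_of_lt hD (by
      rcases le_total a 0 with h | h
      · calc ENNReal.ofReal a = 0 := by simpa using h
          _ < ENNReal.ofReal b := by simpa using hb
      · exact (ENNReal.ofReal_lt_ofReal_iff hb).mpr hab)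
  obtain ⟨z, hz⟩ := iInf_lt_iff.mp hlt
  exact ⟨(z : S → ℝ), z.2, hz.le⟩

/-! ### Outer expectation -/

variable {Ω : Type*} [MeasurableSpace Ω] (P : Measure Ω) [IsProbabilityMeasure P]

def domSet (Z : Ω → ℝ) : Set ℝ :=
  {r : ℝ | ∃ Y : Ω → ℝ, Measurable Y ∧ Integrable Y P ∧ (∀ ω, Z ω ≤ Y ω) ∧
    (∫ ω, Y ω ∂P) = r}

lemma lb_domSet {Z : Ω → ℝ} {c : ℝ} (hc : ∀ ω, c ≤ Z ω) :
    ∀ r ∈ domSet P Z, c ≤ r := by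
  rintro r ⟨Y, hYm, hYi, hYd, rfl⟩
  calc c = ∫ _, c ∂P := by simp
    _ ≤ ∫ ω, Y ω ∂P := integral_mono (integrable_const c) hYi fun ω => (hc ω).trans (hYd ω)

lemma const_mem_domSet {Z : Ω → ℝ} {M : ℝ} (hM : ∀ ω, Z ω ≤ M) : M ∈ domSet P Z :=
  ⟨fun _ => M, measurable_const, integrable_const M, hM, by simp⟩

lemma outerExp_le_integral {Z Y : Ω → ℝ} {c : ℝ} (hc : ∀ ω, c ≤ Z ω)
    (hYm : Measurable Y) (hYi : Integrable Y P) (hYd : ∀ ω, Z ω ≤ Y ω) :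
    outerExp P Z ≤ ∫ ω, Y ω ∂P :=
  csInf_le ⟨c, lb_domSet P hc⟩ ⟨Y, hYm, hYi, hYd, rfl⟩

lemma le_outerExp {Z : Ω → ℝ} {c M : ℝ} (hc : ∀ ω, c ≤ Z ω) (hM : ∀ ω, Z ω ≤ M) :
    c ≤ outerExp P Z :=
  le_csInf ⟨M, const_mem_domSet P hM⟩ (lb_domSet P hc)

/-- Key comparison: if `|Z - W| ≤ a + G` pointwise with everything bounded, then
the outer expectations differ by at most `a + outerExp P G`. -/
lemma outerExp_diff {Z W G : Ω → ℝ} {a MZ MW MG : ℝ} (ha : 0 ≤ a)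
    (hZ : ∀ ω, |Z ω| ≤ MZ) (hW : ∀ ω, |W ω| ≤ MW)
    (hG0 : ∀ ω, 0 ≤ G ω) (hG1 : ∀ ω, G ω ≤ MG)
    (hZW : ∀ ω, |Z ω - W ω| ≤ a + G ω) :
    |outerExp P Z - outerExp P W| ≤ a + outerExp P G := by
  have key : ∀ (Z' W' : Ω → ℝ) (MZ' MW' : ℝ), (∀ ω, |Z' ω| ≤ MZ') → (∀ ω, |W' ω| ≤ MW') →
      (∀ ω, Z' ω ≤ W' ω + a + G ω) →
      outerExp P Z' ≤ outerExp P W' + a + outerExp P G := by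
    intro Z' W' MZ' MW' hZ' hW' hle
    have hlbZ : ∀ ω, -MZ' ≤ Z' ω := fun ω => neg_le_of_abs_le (hZ' ω)
    have h1 : ∀ r ∈ domSet P W', ∀ s ∈ domSet P G, outerExp P Z' ≤ r + a + s := by
      rintro r ⟨Y1, hY1m, hY1i, hY1d, rfl⟩ s ⟨Y2, hY2m, hY2i, hY2d, rfl⟩
      have hdom : ∀ ω, Z' ω ≤ Y1 ω + a + Y2 ω := fun ω => by
        have := hle ω; have := hY1d ω; have := hY2d ω; linarith
      have hmeas : Measurable (fun ω => Y1 ω + a + Y2 ω) :=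
        (hY1m.add_const a).add hY2m
      have hint : Integrable (fun ω => Y1 ω + a + Y2 ω) P :=
        (hY1i.add (integrable_const a)).add hY2i
      have hle' := outerExp_le_integral P hlbZ hmeas hint hdom
      have e1 : (∫ ω, (Y1 ω + a + Y2 ω) ∂P) = (∫ ω, (Y1 ω + a) ∂P) + ∫ ω, Y2 ω ∂P :=
        integral_add (hY1i.add (integrable_const a)) hY2i
      have e2 : (∫ ω, (Y1 ω + a) ∂P) = (∫ ω, Y1 ω ∂P) + ∫ _, a ∂P :=
        integral_add hY1i (integrable_const a)
      have e3 : (∫ _, a ∂P) = a := by simp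
      linarith
    have h2 : ∀ r ∈ domSet P W', outerExp P Z' - r - a ≤ outerExp P G := by
      intro r hr
      refine le_csInf ⟨MG, const_mem_domSet P hG1⟩ fun s hs => ?_
      have := h1 r hr s hs; linarith
    have h3 : outerExp P Z' - a - outerExp P G ≤ outerExp P W' := by
      refine le_csInf ⟨MW', const_mem_domSet P fun ω => le_of_abs_le (hW' ω)⟩ fun r hr => ?_
      have := h2 r hr; linarith
    linarith
  have hA := key Z W MZ MW hZ hW fun ω => by
    have := hZW ω; rcases abs_le.mp this with ⟨h1', h2'⟩; linarith
  have hB := key W Z MW MZ hW hZ fun ω => by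
    have := hZW ω; rcases abs_le.mp this with ⟨h1', h2'⟩; linarith
  rw [abs_le]; constructor <;> linarith

/-! ### Lipschitz images -/

lemma supTotallyBounded_image {Ψ : (S → ℝ) → (S → ℝ)}
    (hΨ : ∀ x y : S → ℝ, supDist (Ψ x) (Ψ y) ≤ supDist x y + supDist x y)
    {T : Set (S → ℝ)} (hT : SupTotallyBounded T) : SupTotallyBounded (Ψ '' T) := by
  classical
  intro δ hδ
  obtain ⟨A, hA⟩ := hT (δ/2) (by linarith)
  refine ⟨A.image Ψ, ?_⟩
  rintro _ ⟨x, hx, rfl⟩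
  obtain ⟨y, hyA, hxy⟩ := hA x hx
  refine ⟨Ψ y, Finset.mem_image_of_mem _ hyA, ?_⟩
  calc supDist (Ψ x) (Ψ y) ≤ supDist x y + supDist x y := hΨ x y
    _ ≤ ENNReal.ofReal (δ/2) + ENNReal.ofReal (δ/2) := add_le_add hxy hxy
    _ = ENNReal.ofReal δ := by
        rw [← ENNReal.ofReal_add (by linarith) (by linarith)]; norm_num

/-- The map `Ψ x = x - w ⬝ (x ∘ e)` is 2-Lipschitz for the sup distance. -/
lemma psi_dist (w : S → ℝ) (e : S → S) (hw : ∀ s, |w s| ≤ 1) (x y : S → ℝ) :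
    supDist (fun s => x s - w s * x (e s)) (fun s => y s - w s * y (e s))
      ≤ supDist x y + supDist x y := by
  refine iSup_le fun s => ?_
  have hb : |(x s - w s * x (e s)) - (y s - w s * y (e s))|
      ≤ |x s - y s| + |x (e s) - y (e s)| := by
    have h1 : (x s - w s * x (e s)) - (y s - w s * y (e s))
        = (x s - y s) - w s * (x (e s) - y (e s)) := by ring
    rw [h1]
    refine le_trans (abs_sub _ _) ?_
    rw [abs_mul]
    have := hw s
    have h2 := abs_nonneg (x (e s) - y (e s))
    nlinarith
  calc ENNReal.ofReal |(x s - w s * x (e s)) - (y s - w s * y (e s))|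
      ≤ ENNReal.ofReal (|x s - y s| + |x (e s) - y (e s)|) := ENNReal.ofReal_le_ofReal hb
    _ ≤ ENNReal.ofReal |x s - y s| + ENNReal.ofReal |x (e s) - y (e s)| := ENNReal.ofReal_add_le
    _ ≤ supDist x y + supDist x y :=
        add_le_add (le_iSup (fun s => ENNReal.ofReal |x s - y s|) s)
          (le_iSup (fun s => ENNReal.ofReal |x s - y s|) (e s))

lemma ev_sqrt (MF a : ℝ) (hMF : 0 ≤ MF) (ha : 0 < a) :
    ∃ N : ℕ, ∀ n ≥ N, 2 * MF / Real.sqrt n ≤ a := by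
  rcases eq_or_lt_of_le hMF with h0 | hpos
  · refine ⟨1, fun n _ => ?_⟩
    rw [← h0]
    simp
    positivity
  · set c := 2 * MF / a with hc
    have hcpos : 0 < c := by positivity
    refine ⟨⌈c^2⌉₊, fun n hn => ?_⟩
    have h1 : c^2 ≤ (n : ℝ) := le_trans (Nat.le_ceil _) (by exact_mod_cast hn)
    have h2 : c ≤ Real.sqrt n := by
      rw [show c = Real.sqrt (c^2) from (Real.sqrt_sq hcpos.le).symm]
      exact Real.sqrt_le_sqrt h1
    have h3 : 0 < Real.sqrt n := lt_of_lt_of_le hcpos h2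
    rw [div_le_iff₀ h3]
    calc 2 * MF = c * a := by rw [hc]; field_simp
      _ ≤ Real.sqrt n * a := mul_le_mul_of_nonneg_right h2 ha.le
      _ = a * Real.sqrt n := mul_comm _ _

/-! ### The abstract continuous-mapping/Slutsky argument -/

set_option maxHeartbeats 1000000 in
lemma conv_of_close {Ω' : Type*} [MeasurableSpace Ω'] {P' : Measure Ω'}
    [IsProbabilityMeasure P']
    {U V : ℕ → Ω → S → ℝ} {K : Ω' → S → ℝ} {Ψ : (S → ℝ) → (S → ℝ)}
    (hΨ : ∀ x y : S → ℝ, supDist (Ψ x) (Ψ y) ≤ supDist x y + supDist x y)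
    (hTight : TightProcess P' K)
    (hconv : ConvInDistr P U P' K)
    (hclose : ∀ c : ℝ, 0 < c →
      ∀ᶠ n in atTop, ∀ ω, supDist (V n ω) (Ψ (U n ω)) ≤ ENNReal.ofReal c) :
    ConvInDistr P V P' (fun ω => Ψ (K ω)) := by
  intro φ hφb hφc
  show Tendsto (fun n => outerExp P fun ω => φ (V n ω)) atTop
    (nhds (outerExp P' fun ω => φ (Ψ (K ω))))
  obtain ⟨Mφ0, hMφ0⟩ := hφb
  have hMφ : ∀ x, |φ x| ≤ max Mφ0 0 := fun x => (hMφ0 x).trans (le_max_left _ _)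
  set Mφ := max Mφ0 0 with hMφdef
  have hMφpos : (0:ℝ) ≤ Mφ := le_max_right _ _
  -- the composed functional φ ∘ Ψ
  have hψc : SupContinuous (fun x => φ (Ψ x)) := by
    intro x ε hε
    obtain ⟨δ, hδ0, hδ⟩ := hφc (Ψ x) ε hε
    refine ⟨δ/2, by linarith, fun y hy => ?_⟩
    refine hδ _ (le_trans (hΨ x y) ?_)
    calc supDist x y + supDist x y
        ≤ ENNReal.ofReal (δ/2) + ENNReal.ofReal (δ/2) := add_le_add hy hy
      _ = ENNReal.ofReal δ := by
          rw [← ENNReal.ofReal_add (by linarith) (by linarith)]; norm_num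
  have hconvψ : Tendsto (fun n => outerExp P fun ω => φ (Ψ (U n ω))) atTop
      (nhds (outerExp P' fun ω => φ (Ψ (K ω)))) :=
    hconv _ ⟨Mφ, fun x => hMφ _⟩ hψc
  rw [Metric.tendsto_atTop] at hconvψ ⊢
  intro ε hε
  have hεp : 0 < ε / (6 + 2*Mφ) := by positivity
  set ε' := ε / (6 + 2*Mφ) with hε'def
  obtain ⟨T, hTtb, _hTcl, hTm⟩ := hTight ε' hεp
  obtain ⟨δ, hδ0, hδ⟩ := uniform_near (Ψ '' T) (supTotallyBounded_image hΨ hTtb) hφc hεp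
  set δg := δ/2 with hδgdef
  have hδg0 : 0 < δg := by rw [hδgdef]; linarith
  -- the cut-off functional g = 2 Mφ hcut
  have hgc : SupContinuous (fun x => 2 * Mφ * hcut T δg x) := by
    intro x η hη
    refine ⟨η * δg / (2 * (2*Mφ + 1)), by positivity, fun y hy => ?_⟩
    have hr0 : 0 ≤ η * δg / (2 * (2*Mφ + 1)) := by positivity
    have hl := hcut_lip T hδg0 hr0 hy
    calc |2*Mφ * hcut T δg x - 2*Mφ * hcut T δg y|
        = 2*Mφ * |hcut T δg x - hcut T δg y| := by
          rw [← mul_sub, abs_mul, abs_of_nonneg (by linarith : (0:ℝ) ≤ 2*Mφ)]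
      _ ≤ 2*Mφ * ((2/δg) * (η * δg / (2 * (2*Mφ + 1)))) :=
          mul_le_mul_of_nonneg_left hl (by linarith)
      _ = 2*Mφ * (η / (2*Mφ + 1)) := by
          congr 1
          field_simp
      _ ≤ η := by
          rw [mul_div_assoc'] at *
          rw [div_le_iff₀ (by linarith : (0:ℝ) < 2*Mφ + 1)]
          nlinarith
  have hgb : BoundedFunctional (fun x => 2 * Mφ * hcut T δg x) := by
    refine ⟨2*Mφ, fun x => ?_⟩
    rw [abs_of_nonneg (mul_nonneg (by linarith) (hcut_nonneg T hδg0 x))]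
    calc 2*Mφ * hcut T δg x ≤ 2*Mφ * 1 :=
          mul_le_mul_of_nonneg_left (hcut_le_one T δg x) (by linarith)
      _ = 2*Mφ := mul_one _
  have hconvg : Tendsto (fun n => outerExp P fun ω => 2 * Mφ * hcut T δg (U n ω)) atTop
      (nhds (outerExp P' fun ω => 2 * Mφ * hcut T δg (K ω))) :=
    hconv _ hgb hgc
  rw [Metric.tendsto_atTop] at hconvg
  -- the limit of the cut-off functional is small
  have hgK : outerExp P' (fun ω => 2 * Mφ * hcut T δg (K ω)) ≤ 2*Mφ*ε' := by
    have hAm : MeasurableSet (toMeasurable P' {ω | K ω ∉ T}) := measurableSet_toMeasurable _ _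
    have hdom : ∀ ω, 2 * Mφ * hcut T δg (K ω)
        ≤ (toMeasurable P' {ω | K ω ∉ T}).indicator (fun _ => 2*Mφ) ω := by
      intro ω
      by_cases hKT : K ω ∈ T
      · rw [hcut_eq_zero T δg hKT, mul_zero]
        exact Set.indicator_nonneg (fun _ _ => by linarith) ω
      · have hmem : ω ∈ toMeasurable P' {ω | K ω ∉ T} :=
          subset_toMeasurable _ _ hKT
        rw [Set.indicator_of_mem hmem]
        calc 2*Mφ * hcut T δg (K ω) ≤ 2*Mφ * 1 :=
              mul_le_mul_of_nonneg_left (hcut_le_one T δg _) (by linarith)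
          _ = 2*Mφ := mul_one _
    have hlow : ∀ ω, (0:ℝ) ≤ 2 * Mφ * hcut T δg (K ω) :=
      fun ω => mul_nonneg (by linarith) (hcut_nonneg T hδg0 _)
    have hint := outerExp_le_integral P' hlow
      (measurable_const.indicator hAm)
      (IntegrableOn.integrable_indicator (integrableOn_const
        (measure_lt_top _ _).ne) hAm)
      hdom
    refine le_trans hint ?_
    rw [integral_indicator_const _ hAm]
    have hmeas : P' (toMeasurable P' {ω | K ω ∉ T}) ≤ ENNReal.ofReal ε' := by
      rw [measure_toMeasurable]
      exact hTm
    have htr : (P' (toMeasurable P' {ω | K ω ∉ T})).toReal ≤ ε' :=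
      ENNReal.toReal_le_of_le_ofReal hεp.le hmeas
    calc (P' (toMeasurable P' {ω | K ω ∉ T})).toReal • (2*Mφ)
        = (P' (toMeasurable P' {ω | K ω ∉ T})).toReal * (2*Mφ) := smul_eq_mul _ _
      _ ≤ ε' * (2*Mφ) := mul_le_mul_of_nonneg_right htr (by linarith)
      _ = 2*Mφ*ε' := by ring
  -- choose n large
  obtain ⟨N1, hN1⟩ := hconvψ ε' hεp
  obtain ⟨N2, hN2⟩ := hconvg ε' hεp
  obtain ⟨N3, hN3⟩ := eventually_atTop.mp (hclose (δg/2) (by linarith))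
  refine ⟨max N1 (max N2 N3), fun n hn => ?_⟩
  have hn1 : N1 ≤ n := le_trans (le_max_left _ _) hn
  have hn2 : N2 ≤ n := le_trans (le_trans (le_max_left _ _) (le_max_right _ _)) hn
  have hn3 : N3 ≤ n := le_trans (le_trans (le_max_right _ _) (le_max_right _ _)) hn
  -- pointwise comparison
  have hpt : ∀ ω, |φ (V n ω) - φ (Ψ (U n ω))| ≤ 2*ε' + 2 * Mφ * hcut T δg (U n ω) := by
    intro ω
    have hVU : supDist (V n ω) (Ψ (U n ω)) ≤ ENNReal.ofReal (δg/2) := hN3 n hn3 ω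
    by_cases hD : DT T (U n ω) ≤ ENNReal.ofReal (δg/2)
    · obtain ⟨z, hzT, hz⟩ := exists_near T (by linarith : (0:ℝ) < 3*δg/4)
        (by linarith : δg/2 < 3*δg/4) hD
      have hz1 : supDist (Ψ z) (Ψ (U n ω)) ≤ ENNReal.ofReal (3*δg/2) := by
        calc supDist (Ψ z) (Ψ (U n ω)) ≤ supDist z (U n ω) + supDist z (U n ω) := hΨ _ _
          _ ≤ ENNReal.ofReal (3*δg/4) + ENNReal.ofReal (3*δg/4) := by
              rw [supDist_comm]; exact add_le_add hz hz
          _ = ENNReal.ofReal (3*δg/2) := by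
              rw [← ENNReal.ofReal_add (by linarith) (by linarith)]; congr 1; ring
      have hz2 : supDist (Ψ z) (V n ω) ≤ ENNReal.ofReal δ := by
        calc supDist (Ψ z) (V n ω)
            ≤ supDist (Ψ z) (Ψ (U n ω)) + supDist (Ψ (U n ω)) (V n ω) :=
              supDist_triangle _ _ _
          _ ≤ ENNReal.ofReal (3*δg/2) + ENNReal.ofReal (δg/2) := by
              refine add_le_add hz1 ?_
              rw [supDist_comm]; exact hVU
          _ = ENNReal.ofReal (2*δg) := by
              rw [← ENNReal.ofReal_add (by linarith) (by linarith)]; congr 1; ring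
          _ ≤ ENNReal.ofReal δ := ENNReal.ofReal_le_ofReal (by rw [hδgdef]; linarith)
      have hz1' : supDist (Ψ z) (Ψ (U n ω)) ≤ ENNReal.ofReal δ :=
        le_trans hz1 (ENNReal.ofReal_le_ofReal (by rw [hδgdef]; linarith))
      have hmem : Ψ z ∈ Ψ '' T := Set.mem_image_of_mem _ hzT
      have h1 := hδ (Ψ z) hmem (V n ω) hz2
      have h2 := hδ (Ψ z) hmem (Ψ (U n ω)) hz1'
      have hgn : (0:ℝ) ≤ 2 * Mφ * hcut T δg (U n ω) :=
        mul_nonneg (by linarith) (hcut_nonneg T hδg0 _)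
      calc |φ (V n ω) - φ (Ψ (U n ω))|
          ≤ |φ (Ψ z) - φ (V n ω)| + |φ (Ψ z) - φ (Ψ (U n ω))| := by
            rw [abs_sub_comm (φ (Ψ z)) (φ (V n ω))]; exact abs_sub_le _ _ _
        _ ≤ ε' + ε' := add_le_add h1 h2
        _ ≤ 2*ε' + 2 * Mφ * hcut T δg (U n ω) := by linarith
    · have hone : hcut T δg (U n ω) = 1 :=
        hcut_eq_one T hδg0 (le_of_lt (not_le.mp hD))
      rw [hone, mul_one]
      calc |φ (V n ω) - φ (Ψ (U n ω))| ≤ |φ (V n ω)| + |φ (Ψ (U n ω))| := abs_sub _ _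
        _ ≤ Mφ + Mφ := add_le_add (hMφ _) (hMφ _)
        _ ≤ 2*ε' + 2*Mφ := by linarith
  -- outer expectation comparison
  have hdiff := outerExp_diff P (by linarith : (0:ℝ) ≤ 2*ε')
    (fun ω => hMφ (V n ω)) (fun ω => hMφ (Ψ (U n ω)))
    (fun ω => mul_nonneg (by linarith : (0:ℝ) ≤ 2*Mφ) (hcut_nonneg T hδg0 (U n ω)))
    (fun ω => by
      calc 2 * Mφ * hcut T δg (U n ω) ≤ 2*Mφ * 1 :=
            mul_le_mul_of_nonneg_left (hcut_le_one T δg _) (by linarith)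
        _ = 2*Mφ := mul_one _)
    hpt
  have h1 := hN1 n hn1
  have h2 := hN2 n hn2
  rw [Real.dist_eq] at h1 h2 ⊢
  have hg0 : 0 ≤ outerExp P (fun ω => 2 * Mφ * hcut T δg (U n ω)) :=
    le_outerExp P
      (fun ω => mul_nonneg (by linarith : (0:ℝ) ≤ 2*Mφ) (hcut_nonneg T hδg0 (U n ω)))
      (fun ω => by
        calc 2 * Mφ * hcut T δg (U n ω) ≤ 2*Mφ * 1 :=
              mul_le_mul_of_nonneg_left (hcut_le_one T δg _) (by linarith)
          _ = 2*Mφ := mul_one _)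
  have hεeq : ε = (6 + 2*Mφ) * ε' := by
    rw [hε'def]
    field_simp
  rcases abs_le.mp hdiff with ⟨hd1, hd2⟩
  rcases abs_lt.mp h1 with ⟨h1a, h1b⟩
  rcases abs_lt.mp h2 with ⟨h2a, h2b⟩
  rw [abs_lt]
  constructor <;> nlinarith [hgK, hg0, hεp]

/-! ### The algebraic identity relating the two processes -/

/-- The point `1` of `[0,1]`. -/
abbrev onePt : ↥(Set.Icc (0:ℝ) 1) := ⟨1, Set.mem_Icc.mpr ⟨zero_le_one, le_refl 1⟩⟩

lemma key_alg (s N J A B2 m : ℝ) (hs : s * s = N) (hs0 : s ≠ 0) (hJ : J ≠ 0)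
    (hNJ : N - J ≠ 0) :
    s * (J/N) * ((N - J)/N) * (J⁻¹ * A - (N - J)⁻¹ * B2)
      = s⁻¹ * (A - J * m) - J/N * (s⁻¹ * ((A + B2) - N * m)) := by
  subst hs
  have h2 : s * s - J ≠ 0 := by assumption
  have h3 : s ^ 2 - J ≠ 0 := by rwa [sq]
  field_simp
  ring

lemma sum_centered (g : ℕ → ℝ) (m : ℝ) (k : ℕ) :
    ∑ i ∈ Finset.Icc 1 k, (g i - m) = (∑ i ∈ Finset.Icc 1 k, g i) - (k : ℝ) * m := by
  rw [Finset.sum_sub_distrib, Finset.sum_const, Nat.card_Icc]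
  simp [nsmul_eq_mul]

lemma sum_split (g : ℕ → ℝ) {j n : ℕ} (hjn : j ≤ n) :
    ∑ i ∈ Finset.Icc 1 n, g i
      = (∑ i ∈ Finset.Icc 1 j, g i) + ∑ i ∈ Finset.Icc (j + 1) n, g i := by
  have e : ∀ a k : ℕ, Finset.Icc (a+1) k = Finset.Ioc a k := by
    intro a k; ext i; simp [Finset.mem_Icc, Finset.mem_Ioc]
  rw [show (1:ℕ) = 0 + 1 from rfl, e 0 n, e 0 j, e j n]
  exact (Finset.sum_Ioc_consecutive g (Nat.zero_le j) hjn).symm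

lemma floor_le_n (n : ℕ) {t : ℝ} (ht1 : t ≤ 1) : ⌊(n : ℝ) * t⌋₊ ≤ n := by
  calc ⌊(n : ℝ) * t⌋₊ ≤ ⌊(n : ℝ)⌋₊ := by
        rcases le_total 0 t with h | h
        · exact Nat.floor_le_floor (by nlinarith)
        · have : (n : ℝ) * t ≤ 0 := mul_nonpos_of_nonneg_of_nonpos (by positivity) h
          simp [Nat.floor_of_nonpos this]
    _ = n := Nat.floor_natCast n

variable {𝓧 : Type*} [MeasurableSpace 𝓧]

lemma two_sample_eq {Ω₀ : Type*} (X : ℕ → Ω₀ → 𝓧) (μ : Measure 𝓧) (F : Set (𝓧 → ℝ))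
    (n : ℕ) (ω : Ω₀) (p : ↥F × ↥(Set.Icc (0:ℝ) 1)) :
    twoSampleProc X F n ω p
      = seqEmpProc X μ F n ω p
        - ((⌊(n : ℝ) * (p.2 : ℝ)⌋₊ : ℝ) / n) * seqEmpProc X μ F n ω (p.1, onePt) := by
  obtain ⟨ht0, ht1⟩ := p.2.2
  set f : 𝓧 → ℝ := (p.1 : 𝓧 → ℝ) with hf
  set t : ℝ := (p.2 : ℝ) with htdef
  set m : ℝ := ∫ x, f x ∂μ with hm
  set j : ℕ := ⌊(n : ℝ) * t⌋₊ with hj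
  have hjn : j ≤ n := floor_le_n n ht1
  simp only [twoSampleProc, seqEmpProc, seqSum, ← hf, ← htdef, ← hm, ← hj, mul_one,
    Nat.floor_natCast]
  rcases Nat.eq_zero_or_pos j with hj0 | hjpos
  · rw [hj0]
    simp
  rcases eq_or_lt_of_le hjn with hjeq | hjlt
  · rw [hjeq]
    have hn0 : (0 : ℝ) < n := by
      have : 0 < n := lt_of_lt_of_le hjpos hjn
      exact_mod_cast this
    rw [sub_self, zero_div, mul_zero, zero_mul, div_self hn0.ne']
    ring
  · have hn0 : (0 : ℝ) < n := by
      have : 0 < n := lt_of_le_of_lt (Nat.zero_le j) hjlt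
      exact_mod_cast this
    have hJ : (j : ℝ) ≠ 0 := by
      exact_mod_cast Nat.pos_iff_ne_zero.mp hjpos
    have hNJ : (n : ℝ) - (j : ℝ) ≠ 0 := by
      have : (j : ℝ) < (n : ℝ) := by exact_mod_cast hjlt
      linarith
    have hs0 : Real.sqrt (n : ℝ) ≠ 0 := by
      rw [Real.sqrt_ne_zero']
      exact hn0
    have hsq : Real.sqrt (n : ℝ) * Real.sqrt (n : ℝ) = (n : ℝ) :=
      Real.mul_self_sqrt hn0.le
    rw [sum_centered (fun i => f (X i ω)) m j, sum_centered (fun i => f (X i ω)) m n,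
      sum_split (fun i => f (X i ω)) hjn]
    exact key_alg (Real.sqrt (n:ℝ)) (n:ℝ) (j:ℝ) _ _ m hsq hs0 hJ hNJ

lemma close_pt {Ω₀ : Type*} (X : ℕ → Ω₀ → 𝓧) (μ : Measure 𝓧) [IsProbabilityMeasure μ]
    (F : Set (𝓧 → ℝ)) {M : ℝ} (hM0 : 0 ≤ M) (hM : ∀ f ∈ F, ∀ x, |f x| ≤ M)
    {n : ℕ} (hn : 1 ≤ n) (ω : Ω₀) (p : ↥F × ↥(Set.Icc (0:ℝ) 1)) :
    |twoSampleProc X F n ω p -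
        (seqEmpProc X μ F n ω p - (p.2 : ℝ) * seqEmpProc X μ F n ω (p.1, onePt))|
      ≤ 2 * M / Real.sqrt n := by
  have hnR : (0:ℝ) < n := by exact_mod_cast hn
  have hs0 : (0:ℝ) < Real.sqrt n := Real.sqrt_pos.mpr hnR
  obtain ⟨ht0, ht1⟩ := p.2.2
  have hmb : |∫ x, (p.1 : 𝓧 → ℝ) x ∂μ| ≤ M := by
    by_cases hi : Integrable (p.1 : 𝓧 → ℝ) μ
    · calc |∫ x, (p.1 : 𝓧 → ℝ) x ∂μ| ≤ ∫ x, |(p.1 : 𝓧 → ℝ) x| ∂μ := by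
            simpa [Real.norm_eq_abs] using
              norm_integral_le_integral_norm (μ := μ) (f := (p.1 : 𝓧 → ℝ))
        _ ≤ ∫ _, M ∂μ := integral_mono hi.abs (integrable_const M)
            (fun x => hM _ p.1.2 x)
        _ = M := by simp
    · rw [integral_undef hi]
      simpa using hM0
  have hY1 : |seqEmpProc X μ F n ω (p.1, onePt)| ≤ (Real.sqrt n)⁻¹ * ((n:ℝ) * (2*M)) := by
    simp only [seqEmpProc, seqSum]
    rw [mul_one, Nat.floor_natCast, abs_mul, abs_inv, abs_of_nonneg (Real.sqrt_nonneg _)]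
    refine mul_le_mul_of_nonneg_left ?_ (by positivity)
    calc |∑ i ∈ Finset.Icc 1 n, ((p.1 : 𝓧 → ℝ) (X i ω) - ∫ x, (p.1 : 𝓧 → ℝ) x ∂μ)|
        ≤ ∑ i ∈ Finset.Icc 1 n, |(p.1 : 𝓧 → ℝ) (X i ω) - ∫ x, (p.1 : 𝓧 → ℝ) x ∂μ| :=
          Finset.abs_sum_le_sum_abs _ _
      _ ≤ ∑ _i ∈ Finset.Icc 1 n, (2*M) := by
          refine Finset.sum_le_sum fun i _ => ?_
          have h1 := hM _ p.1.2 (X i ω)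
          calc |(p.1 : 𝓧 → ℝ) (X i ω) - ∫ x, (p.1 : 𝓧 → ℝ) x ∂μ|
              ≤ |(p.1 : 𝓧 → ℝ) (X i ω)| + |∫ x, (p.1 : 𝓧 → ℝ) x ∂μ| := abs_sub _ _
            _ ≤ 2*M := by linarith
      _ = (n:ℝ) * (2*M) := by
          rw [Finset.sum_const, Nat.card_Icc]
          simp [nsmul_eq_mul]
  have hfl : ((⌊(n:ℝ) * (p.2:ℝ)⌋₊ : ℕ) : ℝ) ≤ (n:ℝ) * (p.2:ℝ) :=
    Nat.floor_le (mul_nonneg (by positivity) ht0)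
  have hfu : (n:ℝ) * (p.2:ℝ) < (⌊(n:ℝ) * (p.2:ℝ)⌋₊ : ℝ) + 1 := Nat.lt_floor_add_one _
  have hfrac : |(p.2:ℝ) - (⌊(n:ℝ) * (p.2:ℝ)⌋₊ : ℝ)/n| ≤ 1/n := by
    rw [abs_of_nonneg]
    · rw [sub_le_iff_le_add]
      have h1 : (p.2:ℝ) ≤ ((⌊(n:ℝ) * (p.2:ℝ)⌋₊ : ℝ) + 1)/n := by
        rw [le_div_iff₀ hnR]
        nlinarith
      have h2 : ((⌊(n:ℝ) * (p.2:ℝ)⌋₊ : ℝ) + 1)/n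
          = 1/n + (⌊(n:ℝ) * (p.2:ℝ)⌋₊ : ℝ)/n := by ring
      linarith
    · rw [sub_nonneg, div_le_iff₀ hnR]
      nlinarith
  rw [two_sample_eq X μ F n ω p]
  have heq : (seqEmpProc X μ F n ω p
        - ((⌊(n:ℝ) * (p.2:ℝ)⌋₊ : ℝ)/n) * seqEmpProc X μ F n ω (p.1, onePt))
      - (seqEmpProc X μ F n ω p - (p.2:ℝ) * seqEmpProc X μ F n ω (p.1, onePt))
      = ((p.2:ℝ) - (⌊(n:ℝ) * (p.2:ℝ)⌋₊ : ℝ)/n) * seqEmpProc X μ F n ω (p.1, onePt) := by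
    ring
  rw [heq, abs_mul]
  calc |(p.2:ℝ) - (⌊(n:ℝ) * (p.2:ℝ)⌋₊ : ℝ)/n| * |seqEmpProc X μ F n ω (p.1, onePt)|
      ≤ (1/n) * ((Real.sqrt n)⁻¹ * ((n:ℝ) * (2*M))) :=
        mul_le_mul hfrac hY1 (abs_nonneg _) (by positivity)
    _ = 2 * M / Real.sqrt n := by
        field_simp


end Aux
end SECLT

set_option maxHeartbeats 2000000 in
/-- **Asymptotics of the two-sample comparison process** (Theorem A.1 of the paper).
If the sequential empirical process `U_n` converges in distribution in `ℓ^∞(F × [0,1])` to a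
tight centred Gaussian process `K`, then `R_n ⇒ (K(f,t) − t K(f,1))_{(f,t)}`. -/
theorem two_sample_process_asymptotics
    {Ω Ω' 𝓧 : Type} [MeasurableSpace Ω] [MeasurableSpace Ω'] [MeasurableSpace 𝓧]
    (P : MeasureTheory.Measure Ω) [MeasureTheory.IsProbabilityMeasure P]
    (X : ℕ → Ω → 𝓧) (hXmeas : ∀ i, Measurable (X i)) (hstat : IsStationary P X)
    (μ : MeasureTheory.Measure 𝓧) (hμ : MeasureTheory.Measure.map (X 0) P = μ)
    (F : Set (𝓧 → ℝ)) (hFmeas : ∀ f ∈ F, Measurable f) (hFbd : UnifBounded F)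
    (P' : MeasureTheory.Measure Ω') [MeasureTheory.IsProbabilityMeasure P']
    (K : Ω' → (↥F × ↥(Set.Icc (0:ℝ) 1)) → ℝ)
    (hGauss : IsCenteredGaussian P' K) (hTight : TightProcess P' K)
    (hconv : ConvInDistr P (seqEmpProc X μ F) P' K) :
    ConvInDistr P (twoSampleProc X F) P'
      (fun ω p => K ω p - (p.2 : ℝ) *
        K ω (p.1, ⟨1, Set.mem_Icc.mpr ⟨zero_le_one, le_refl 1⟩⟩)) := by
  have hμprob : IsProbabilityMeasure μ := by
    rw [← hμ]
    exact Measure.isProbabilityMeasure_map (hXmeas 0).aemeasurable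
  obtain ⟨MF0, hMF0⟩ := hFbd
  have hMF : ∀ f ∈ F, ∀ x, |f x| ≤ max MF0 0 :=
    fun f hf x => (hMF0 f hf x).trans (le_max_left _ _)
  have hMFpos : (0:ℝ) ≤ max MF0 0 := le_max_right _ _
  have hw : ∀ p : ↥F × ↥(Set.Icc (0:ℝ) 1), |(p.2 : ℝ)| ≤ 1 := fun p =>
    abs_le.mpr ⟨by linarith [p.2.2.1], p.2.2.2⟩
  have hmain := Aux.conv_of_close (P := P) (P' := P')
      (U := seqEmpProc X μ F) (V := twoSampleProc X F) (K := K)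
      (Ψ := fun x p => x p - (p.2 : ℝ) * x (p.1, Aux.onePt))
      (fun x y => Aux.psi_dist (fun p => (p.2 : ℝ)) (fun p => (p.1, Aux.onePt)) hw x y)
      hTight hconv ?_
  · exact hmain
  · intro c hc
    obtain ⟨N0, hN0⟩ := Aux.ev_sqrt (max MF0 0) c hMFpos hc
    refine eventually_atTop.2 ⟨max N0 1, fun n hn ω => ?_⟩
    have hn0 : N0 ≤ n := le_trans (le_max_left _ _) hn
    have hn1 : 1 ≤ n := le_trans (le_max_right _ _) hn
    refine Aux.supDist_le_ofReal fun p => ?_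
    exact le_trans (Aux.close_pt X μ F hMFpos hMF hn1 ω p) (hN0 n hn0)
end
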